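/- arXiv:1603.02525 — 3 statements merged into one kernel-verified Lean document; each statement's English description precedes it below -/
import Mathlib

section
/- The map f': D_{2k}^e → D_{2k}^{e+1} defined by decomposing x ∈ D_{2k}^e (with e < k) as x = u ∘ U ∘ v ∘ D ∘ w, where the U-step at position a is the first U-step above the line y=0 and the D-step at position b is the first D-step thereafter returning to the line y=0, and setting f'(x) := v ∘ D ∘ u ∘ U ∘ w, is a bijection between D_{2k}^e and D_{2k}^{e+1} for every e ∈ {0,1,...,k-1}. -/
/-- Value of a step: `true` = U-step (+1), `false` = D-step (-1). -/
def stepVal (b : Bool) : ℤ := if b then 1 else -1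

/-- Height of the lattice path `x` after its first `i` steps. -/
def pathHeight (x : List Bool) (i : ℕ) : ℤ := ((x.take i).map stepVal).sum

/-- The step at position `i` (0-indexed) is a U-step. -/
def isU (x : List Bool) (i : ℕ) : Bool := x.getD i true

/-- The step at position `i` (0-indexed) is a D-step. -/
def isD (x : List Bool) (i : ℕ) : Bool := !(x.getD i true)

/-- Number of flaws: D-steps lying below the line y=0 (i.e. starting at height ≤ 0). -/
def flaws (x : List Bool) : ℕ :=
  ((List.range x.length).filter (fun i => isD x i && decide (pathHeight x i ≤ 0))).length

/-- `DyckSet k e` = the set `D_{2k}^e` of Dyck paths with `2k` steps and `e` flaws. -/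
def DyckSet (k e : ℕ) : Set (List Bool) :=
  {x | x.length = 2*k ∧ x.count true = k ∧ flaws x = e}

/-- `LSet k m` = the set `L_{2k,m}` of lattice paths with `2k` steps and `m` U-steps. -/
def LSet (k m : ℕ) : Set (List Bool) :=
  {x | x.length = 2*k ∧ x.count true = m}

/-- `d_c(x)`: number of D-steps of `x` starting on the line `y = c`. -/
def dstart (x : List Bool) (c : ℤ) : ℕ :=
  ((List.range x.length).filter (fun i => isD x i && decide (pathHeight x i = c))).length

/-- `u_c(x)`: number of U-steps of `x` starting on the line `y = c`. -/
def ustart (x : List Bool) (c : ℤ) : ℕ :=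
  ((List.range x.length).filter (fun i => isU x i && decide (pathHeight x i = c))).length

/-- Positions (in increasing order) of D-steps of `x` touching the line `y = c`
(a D-step at position `i` goes from height `pathHeight x i` down to `pathHeight x i - 1`,
so it touches `y = c` iff its start height is `c` or `c+1`). -/
def dtouch (x : List Bool) (c : ℤ) : List ℕ :=
  (List.range x.length).filter
    (fun i => isD x i && (decide (pathHeight x i = c) || decide (pathHeight x i = c+1)))

/-- Positions (in increasing order) of U-steps of `x` touching the line `y = c`
(a U-step at position `i` goes from height `pathHeight x i` up to `pathHeight x i + 1`,
so it touches `y = c` iff its start height is `c` or `c-1`). -/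
def utouch (x : List Bool) (c : ℤ) : List ℕ :=
  (List.range x.length).filter
    (fun i => isU x i && (decide (pathHeight x i = c) || decide (pathHeight x i = c-1)))

/-- Position (0-indexed) flipped by `g`: the `(d_0(x)+1)`-th D-step touching `y=0`. -/
def gIdx (x : List Bool) : ℕ := (dtouch x 0).getD (dstart x 0) 0

/-- The map `g`: flip the `(d_0(x)+1)`-th D-step of `x` touching the line `y=0`. -/
def gMap (x : List Bool) : List Bool := x.set (gIdx x) true

/-- Position (0-indexed) flipped by `h`: the `u_1(x)`-th U-step touching `y=1`. -/
def hIdx (x : List Bool) : ℕ := (utouch x 1).getD (ustart x 1 - 1) 0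

/-- The map `h`: flip the `u_1(x)`-th U-step of `x` touching the line `y=1`. -/
def hMap (x : List Bool) : List Bool := x.set (hIdx x) false

/-- Position (0-indexed) flipped by `g'`: the `d_0(x)`-th D-step touching `y=0`. -/
def g'Idx (x : List Bool) : ℕ := (dtouch x 0).getD (dstart x 0 - 1) 0

/-- The map `g'`: flip the `d_0(x)`-th D-step of `x` touching the line `y=0`. -/
def g'Map (x : List Bool) : List Bool := x.set (g'Idx x) true

/-- Position (0-indexed) flipped by `h'`: the `(u_1(x)+1)`-th U-step touching `y=1`. -/
def h'Idx (x : List Bool) : ℕ := (utouch x 1).getD (ustart x 1) 0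

/-- The map `h'`: flip the `(u_1(x)+1)`-th U-step of `x` touching the line `y=1`. -/
def h'Map (x : List Bool) : List Bool := x.set (h'Idx x) false

/-- The minimum-change map `f := h ∘ g`. -/
def fMap (x : List Bool) : List Bool := hMap (gMap x)

/-- `piSeq n x`: the sequence of (1-indexed) positions flipped by the successive
applications `g, h, g, h, ...` over `n` applications of `f` starting from `x`. -/
def piSeq : ℕ → List Bool → List ℕ
  | 0, _ => []
  | n+1, x => (gIdx x + 1) :: (hIdx (gMap x) + 1) :: piSeq n (fMap x)

/-- Reverse the step sequence and complement every step. -/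
def revComp (x : List Bool) : List Bool := x.reverse.map (fun b => !b)


/-- `a`: position (0-indexed) of the first U-step of `x` lying above the line `y=0`
(i.e. starting at height ≥ 0). -/
def aIdx (x : List Bool) : ℕ :=
  ((List.range x.length).filter (fun i => isU x i && decide (0 ≤ pathHeight x i))).headD 0

/-- `b`: position (0-indexed) of the first D-step after `a` returning to the line `y=0`
(i.e. ending at height 0, so starting at height 1). -/
def bIdx (x : List Bool) : ℕ :=
  ((List.range x.length).filter
    (fun i => decide (aIdx x < i) && isD x i && decide (pathHeight x i = 1))).headD 0

/-- The classical Chung-Feller bijection `f'`: writing `x = u ∘ U ∘ v ∘ D ∘ w`,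
set `f'(x) := v ∘ D ∘ u ∘ U ∘ w`. -/
def fPrime (x : List Bool) : List Bool :=
  ((x.drop (aIdx x + 1)).take (bIdx x - aIdx x - 1)) ++ [false] ++
    (x.take (aIdx x)) ++ [true] ++ (x.drop (bIdx x + 1))

/-! ### Auxiliary development for `fPrime_bijection` -/

lemma CF_pathHeight_zero (x : List Bool) : pathHeight x 0 = 0 := rfl

lemma CF_pathHeight_cons (b : Bool) (t : List Bool) (i : ℕ) :
    pathHeight (b :: t) (i+1) = stepVal b + pathHeight t i := by
  simp [pathHeight]

/-- Total height change of a path. -/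
def CF_hsum (x : List Bool) : ℤ := (x.map stepVal).sum

lemma CF_pathHeight_length (x : List Bool) : pathHeight x x.length = CF_hsum x := by
  simp [pathHeight, CF_hsum]

lemma CF_hsum_append (p q : List Bool) : CF_hsum (p ++ q) = CF_hsum p + CF_hsum q := by
  simp [CF_hsum]

lemma CF_hsum_true : CF_hsum [true] = 1 := by simp [CF_hsum, stepVal]
lemma CF_hsum_false : CF_hsum [false] = -1 := by simp [CF_hsum, stepVal]

lemma CF_pathHeight_append_left {p : List Bool} (q : List Bool) {i : ℕ} (h : i ≤ p.length) :
    pathHeight (p ++ q) i = pathHeight p i := by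
  unfold pathHeight
  rw [List.take_append_of_le_length h]

lemma CF_pathHeight_append_right (p q : List Bool) (j : ℕ) :
    pathHeight (p ++ q) (p.length + j) = CF_hsum p + pathHeight q j := by
  unfold pathHeight
  rw [List.take_append]
  simp [CF_hsum]
  rw [List.take_of_length_le (by simp)]

lemma CF_pathHeight_succ (x : List Bool) {i : ℕ} (h : i < x.length) :
    pathHeight x (i+1) = pathHeight x i + stepVal (x.getD i true) := by
  induction x generalizing i with
  | nil => simp at h
  | cons b t ih =>
    cases i with
    | zero => simp [CF_pathHeight_cons, CF_pathHeight_zero, stepVal]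
    | succ n =>
      have hn : n < t.length := by simpa using h
      rw [CF_pathHeight_cons, CF_pathHeight_cons, ih hn, List.getD_cons_succ]
      ring

lemma CF_ph_take (x : List Bool) {n i : ℕ} (h : i ≤ n) :
    pathHeight (x.take n) i = pathHeight x i := by
  unfold pathHeight
  rw [List.take_take, min_eq_left h]

lemma CF_ph_add (x : List Bool) (s j : ℕ) :
    pathHeight x (s + j) = pathHeight x s + pathHeight (x.drop s) j := by
  unfold pathHeight
  rw [List.take_add]
  simp

lemma CF_hsum_take (x : List Bool) {n : ℕ} (h : n ≤ x.length) :
    CF_hsum (x.take n) = pathHeight x n := by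
  rw [← CF_pathHeight_length, List.length_take, min_eq_left h, CF_ph_take x le_rfl]

lemma CF_hsum_eq_counts (x : List Bool) :
    CF_hsum x = (x.count true : ℤ) - (x.count false : ℤ) := by
  induction x with
  | nil => simp [CF_hsum]
  | cons b t ih =>
    have : CF_hsum (b :: t) = stepVal b + CF_hsum t := by simp [CF_hsum]
    rw [this, ih]
    cases b <;> simp [stepVal, List.count_cons] <;> push_cast <;> ring

lemma CF_count_add (x : List Bool) : x.count true + x.count false = x.length := by
  induction x with
  | nil => simp
  | cons b t ih => cases b <;> simp [List.count_cons] <;> omega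

/-- Recursive flaw count with offset `c`. -/
def CF_flf : ℤ → List Bool → ℕ
  | _, [] => 0
  | c, b :: t => (if b = false ∧ c ≤ 0 then 1 else 0) + CF_flf (c + stepVal b) t

lemma CF_flf_eq (x : List Bool) (c : ℤ) :
    ((List.range x.length).filter
      (fun i => !(x.getD i true) && decide (c + pathHeight x i ≤ 0))).length = CF_flf c x := by
  induction x generalizing c with
  | nil => rfl
  | cons b t ih =>
    rw [List.length_cons, List.range_succ_eq_map, List.filter_cons]
    have hpred : ∀ i ∈ List.range t.length,
        ((fun i => !((b :: t).getD i true) && decide (c + pathHeight (b :: t) i ≤ 0)) ∘ Nat.succ) i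
        = (fun i => !(t.getD i true) && decide ((c + stepVal b) + pathHeight t i ≤ 0)) i := by
      intro i _
      simp only [Function.comp_apply, List.getD_cons_succ, CF_pathHeight_cons]
      congr 1
      exact decide_eq_decide.mpr (by constructor <;> intro hh <;> linarith)
    rw [List.filter_map, List.filter_congr hpred]
    have hlen : ((List.filter
        (fun i => !(t.getD i true) && decide ((c + stepVal b) + pathHeight t i ≤ 0))
        (List.range t.length)).map Nat.succ).length = CF_flf (c + stepVal b) t := by
      rw [List.length_map]; exact ih _
    clear hpred
    rw [List.length_map] at hlen
    cases b with
    | true =>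
      have hP0 : (!(true :: t).getD 0 true && decide (c + pathHeight (true :: t) 0 ≤ 0)) = false := by
        simp
      rw [hP0, if_neg (by simp), List.length_map, hlen]
      simp [CF_flf]
    | false =>
      have hP0 : (!(false :: t).getD 0 true
          && decide (c + pathHeight (false :: t) 0 ≤ 0)) = decide (c ≤ 0) := by
        simp [CF_pathHeight_zero]
      rw [hP0]
      by_cases hc : c ≤ 0
      · rw [if_pos (by simp [hc]), List.length_cons, List.length_map, hlen]
        simp [CF_flf, hc]
        omega
      · rw [if_neg (by simp [hc]), List.length_map, hlen]
        simp [CF_flf, hc]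

lemma CF_flaws_eq_flf (x : List Bool) : flaws x = CF_flf 0 x := by
  rw [← CF_flf_eq x 0]
  unfold flaws isD
  congr 1
  apply List.filter_congr
  intro i _
  simp

lemma CF_flf_append (p q : List Bool) (c : ℤ) :
    CF_flf c (p ++ q) = CF_flf c p + CF_flf (c + CF_hsum p) q := by
  induction p generalizing c with
  | nil => simp [CF_flf, CF_hsum]
  | cons b t ih =>
    have h1 : CF_hsum (b :: t) = stepVal b + CF_hsum t := by simp [CF_hsum]
    have h2 : CF_flf c ((b :: t) ++ q) =
        (if b = false ∧ c ≤ 0 then 1 else 0) + CF_flf (c + stepVal b) (t ++ q) := rfl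
    rw [h2, ih, CF_flf, h1, ← add_assoc, add_assoc c (stepVal b) (CF_hsum t)]

lemma CF_flf_true (c : ℤ) : CF_flf c [true] = 0 := by simp [CF_flf]
lemma CF_flf_false (c : ℤ) : CF_flf c [false] = if c ≤ 0 then 1 else 0 := by simp [CF_flf]

lemma CF_flf_eq_count (u : List Bool) (c : ℤ)
    (h : ∀ i ≤ u.length, c + pathHeight u i ≤ 0) :
    CF_flf c u = u.count false := by
  induction u generalizing c with
  | nil => rfl
  | cons b t ih =>
    have h0 : c ≤ 0 := by simpa [CF_pathHeight_zero] using h 0 (by omega)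
    have ht : ∀ i ≤ t.length, (c + stepVal b) + pathHeight t i ≤ 0 := by
      intro i hi
      have := h (i+1) (by simpa using Nat.succ_le_succ hi)
      rw [CF_pathHeight_cons] at this; linarith
    cases b
    · simp [CF_flf, h0, ih _ ht, List.count_cons]
      omega
    · simp [CF_flf, ih _ ht, List.count_cons]

lemma CF_flf_eq_zero (v : List Bool) (c : ℤ)
    (h : ∀ i ≤ v.length, 0 ≤ c + pathHeight v i) :
    CF_flf c v = 0 := by
  induction v generalizing c with
  | nil => rfl
  | cons b t ih =>
    have ht : ∀ i ≤ t.length, 0 ≤ (c + stepVal b) + pathHeight t i := by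
      intro i hi
      have := h (i+1) (by simpa using Nat.succ_le_succ hi)
      rw [CF_pathHeight_cons] at this; linarith
    cases b with
    | true => simp [CF_flf, ih _ ht]
    | false =>
      have h1 : 0 ≤ c + stepVal false := by
        have := h 1 (by simp)
        rw [CF_pathHeight_cons] at this
        simpa [CF_pathHeight_zero] using this
      have hc : ¬ (c ≤ 0) := by simp [stepVal] at h1; omega
      simp [CF_flf, hc, ih _ ht]

lemma CF_headD_filter_range (P : ℕ → Bool) {n m : ℕ} (d : ℕ) (hm : m < n) (hP : P m = true)
    (hmin : ∀ i < m, P i = false) :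
    ((List.range n).filter P).headD d = m := by
  have h1 : n = m + (n - m) := by omega
  rw [h1, List.range_add, List.filter_append]
  have h2 : (List.range m).filter P = [] := by
    apply List.filter_eq_nil_iff.mpr
    intro a ha
    simp [hmin a (List.mem_range.mp ha)]
  rw [h2, List.nil_append]
  obtain ⟨t, ht⟩ : ∃ t, n - m = t + 1 := ⟨n - m - 1, by omega⟩
  rw [ht, List.range_succ_eq_map, List.map_cons]
  rw [List.filter_cons]
  simp [hP]

lemma CF_exists_cross_down (x : List Bool) {i n : ℕ} (hik : i ≤ n) (hn : n ≤ x.length)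
    (h1 : 1 ≤ pathHeight x i) (h0 : pathHeight x n ≤ 0) :
    ∃ j, i ≤ j ∧ j < n ∧ x.getD j true = false ∧ pathHeight x j = 1 ∧ pathHeight x (j+1) = 0 := by
  classical
  have hex : ∃ t, i ≤ t ∧ t ≤ n ∧ pathHeight x t ≤ 0 := ⟨n, hik, le_refl n, h0⟩
  obtain ⟨hmi, hmn, hmh⟩ := Nat.find_spec hex
  set m := Nat.find hex with hm
  have hmne : m ≠ i := by
    intro hh
    rw [hh] at hmh
    linarith
  obtain ⟨j, hj⟩ : ∃ j, m = j + 1 := ⟨m - 1, by omega⟩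
  have hji : i ≤ j := by omega
  have hjn : j < n := by omega
  have hnotj : ¬(i ≤ j ∧ j ≤ n ∧ pathHeight x j ≤ 0) := Nat.find_min hex (by omega)
  push_neg at hnotj
  have hphj : 0 < pathHeight x j := hnotj hji (by omega)
  have hsucc := CF_pathHeight_succ x (lt_of_lt_of_le hjn hn)
  rw [← hj] at hsucc
  cases hb : x.getD j true with
  | true => rw [hb] at hsucc; simp [stepVal] at hsucc; linarith
  | false =>
    rw [hb] at hsucc; simp [stepVal] at hsucc
    have hj1 : pathHeight x j = 1 := by omega
    exact ⟨j, hji, hjn, hb, hj1, by rw [← hj]; omega⟩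

lemma CF_exists_cross_up (x : List Bool) {i n : ℕ} (hik : i ≤ n) (hn : n ≤ x.length)
    (h1 : pathHeight x i ≤ -1) (h0 : 0 ≤ pathHeight x n) :
    ∃ j, i ≤ j ∧ j < n ∧ x.getD j true = true ∧ pathHeight x j = -1 ∧ pathHeight x (j+1) = 0 := by
  classical
  have hex : ∃ t, i ≤ t ∧ t ≤ n ∧ 0 ≤ pathHeight x t := ⟨n, hik, le_refl n, h0⟩
  obtain ⟨hmi, hmn, hmh⟩ := Nat.find_spec hex
  set m := Nat.find hex with hm
  have hmne : m ≠ i := by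
    intro hh
    rw [hh] at hmh
    linarith
  obtain ⟨j, hj⟩ : ∃ j, m = j + 1 := ⟨m - 1, by omega⟩
  have hji : i ≤ j := by omega
  have hjn : j < n := by omega
  have hnotj : ¬(i ≤ j ∧ j ≤ n ∧ 0 ≤ pathHeight x j) := Nat.find_min hex (by omega)
  push_neg at hnotj
  have hphj : pathHeight x j < 0 := hnotj hji (by omega)
  have hsucc := CF_pathHeight_succ x (lt_of_lt_of_le hjn hn)
  rw [← hj] at hsucc
  cases hb : x.getD j true with
  | false => rw [hb] at hsucc; simp [stepVal] at hsucc; linarith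
  | true =>
    rw [hb] at hsucc; simp [stepVal] at hsucc
    have hj1 : pathHeight x j = -1 := by omega
    exact ⟨j, hji, hjn, hb, hj1, by rw [← hj]; omega⟩

lemma CF_heights_nonpos (x : List Bool) {a : ℕ} (ha : a ≤ x.length)
    (h : ∀ i < a, x.getD i true = true → pathHeight x i < 0) :
    ∀ i ≤ a, pathHeight x i ≤ 0 := by
  intro i hi
  induction i with
  | zero => simp [CF_pathHeight_zero]
  | succ n ih =>
    have hn : n < a := hi
    have h1 := ih (le_of_lt hn)
    have hlt : n < x.length := lt_of_lt_of_le hn ha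
    rw [CF_pathHeight_succ x hlt]
    cases hb : x.getD n true with
    | true => have := h n hn hb; simp [stepVal]; omega
    | false => simp [stepVal]; omega

lemma CF_heights_nonneg (x : List Bool) {a : ℕ} (ha : a ≤ x.length)
    (h : ∀ i < a, x.getD i true = false → 0 < pathHeight x i) :
    ∀ i ≤ a, 0 ≤ pathHeight x i := by
  intro i hi
  induction i with
  | zero => simp [CF_pathHeight_zero]
  | succ n ih =>
    have hn : n < a := hi
    have h1 := ih (le_of_lt hn)
    have hlt : n < x.length := lt_of_lt_of_le hn ha
    rw [CF_pathHeight_succ x hlt]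
    cases hb : x.getD n true with
    | true => simp [stepVal]; omega
    | false => have := h n hn hb; simp [stepVal]; omega

lemma CF_surgery (x : List Bool) {a b : ℕ} (hab : a < b) (hb : b < x.length) :
    x = x.take a ++ x.getD a true ::
      ((x.drop (a+1)).take (b - (a+1))) ++ x.getD b true :: x.drop (b+1) := by
  have hdb : x.drop b = x.getD b true :: x.drop (b+1) := by
    rw [List.drop_eq_getElem_cons hb, ← List.getD_eq_getElem x true hb]
  have hda : x.drop a = x.getD a true :: x.drop (a+1) := by
    rw [List.drop_eq_getElem_cons (lt_trans hab hb), ← List.getD_eq_getElem x true (lt_trans hab hb)]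
  have htb : x.take b = x.take a ++ x.getD a true :: (x.drop (a+1)).take (b - (a+1)) := by
    have h1 : b = a + (b - a) := by omega
    conv_lhs => rw [h1]
    rw [List.take_add, hda]
    have h2 : b - a = (b - (a+1)) + 1 := by omega
    rw [h2, List.take_succ_cons]
  conv_lhs => rw [← List.take_append_drop b x]
  rw [htb, hdb]

lemma CF_hsum_single (s : Bool) : CF_hsum [s] = stepVal s := by simp [CF_hsum]

section Decomp
variable (p q r : List Bool) (s t : Bool)

lemma CF_g1 : p ++ s :: q ++ t :: r = p ++ ((s :: q) ++ (t :: r)) := by simp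
lemma CF_g2 : p ++ s :: q ++ t :: r = (p ++ [s]) ++ (q ++ t :: r) := by simp
lemma CF_g3 : p ++ s :: q ++ t :: r = (p ++ s :: q) ++ (t :: r) := by simp
lemma CF_g4 : p ++ s :: q ++ t :: r = (p ++ s :: q ++ [t]) ++ r := by simp

lemma CF_len_decomp : (p ++ s :: q ++ t :: r).length = p.length + q.length + r.length + 2 := by
  simp
  omega

lemma CF_ph_decomp_left {i : ℕ} (hi : i ≤ p.length) :
    pathHeight (p ++ s :: q ++ t :: r) i = pathHeight p i := by
  rw [CF_g1, CF_pathHeight_append_left _ hi]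

lemma CF_getD_decomp_left {i : ℕ} (hi : i < p.length) :
    (p ++ s :: q ++ t :: r).getD i true = p.getD i true := by
  rw [CF_g1, List.getD_append _ _ _ _ hi]

lemma CF_getD_decomp_a : (p ++ s :: q ++ t :: r).getD p.length true = s := by
  rw [CF_g1, List.getD_append_right _ _ _ _ le_rfl]
  simp

lemma CF_ph_decomp_mid {j : ℕ} (hj : j ≤ q.length) :
    pathHeight (p ++ s :: q ++ t :: r) (p.length + 1 + j)
      = CF_hsum p + stepVal s + pathHeight q j := by
  have hl : p.length + 1 + j = (p ++ [s]).length + j := by simp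
  rw [CF_g2, hl, CF_pathHeight_append_right, CF_hsum_append, CF_hsum_single,
    CF_pathHeight_append_left _ hj]

lemma CF_getD_decomp_mid {j : ℕ} (hj : j < q.length) :
    (p ++ s :: q ++ t :: r).getD (p.length + 1 + j) true = q.getD j true := by
  have hl : (p ++ [s]).length ≤ p.length + 1 + j := by simp
  rw [CF_g2, List.getD_append_right _ _ _ _ hl]
  have h2 : p.length + 1 + j - (p ++ [s]).length = j := by simp
  rw [h2, List.getD_append _ _ _ _ hj]

lemma CF_ph_decomp_b :
    pathHeight (p ++ s :: q ++ t :: r) (p.length + 1 + q.length)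
      = CF_hsum p + stepVal s + CF_hsum q := by
  rw [CF_ph_decomp_mid p q r s t le_rfl, CF_pathHeight_length]

lemma CF_getD_decomp_b : (p ++ s :: q ++ t :: r).getD (p.length + 1 + q.length) true = t := by
  have hl : (p ++ s :: q).length ≤ p.length + 1 + q.length := by simp; omega
  rw [CF_g3, List.getD_append_right _ _ _ _ hl]
  have h2 : p.length + 1 + q.length - (p ++ s :: q).length = 0 := by simp; omega
  rw [h2]
  rfl

lemma CF_take_decomp : (p ++ s :: q ++ t :: r).take p.length = p := by
  rw [CF_g1, List.take_left]

lemma CF_drop_decomp_mid : (p ++ s :: q ++ t :: r).drop (p.length + 1) = q ++ t :: r := by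
  rw [CF_g2, List.drop_left' (by simp)]

lemma CF_drop_decomp_w : (p ++ s :: q ++ t :: r).drop (p.length + 1 + q.length + 1) = r := by
  rw [CF_g4, List.drop_left' (by simp; omega)]

end Decomp

/-- A nonpositive excursion: total height change 0, all intermediate heights ≤ 0. -/
def CF_NegP (u : List Bool) : Prop := CF_hsum u = 0 ∧ ∀ i ≤ u.length, pathHeight u i ≤ 0

/-- A nonnegative excursion: total height change 0, all intermediate heights ≥ 0. -/
def CF_PosP (v : List Bool) : Prop := CF_hsum v = 0 ∧ ∀ i ≤ v.length, 0 ≤ pathHeight v i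

lemma CF_key_aIdx (u v w : List Bool) (hu : CF_NegP u) (hv : CF_PosP v) :
    aIdx (u ++ true :: v ++ false :: w) = u.length := by
  obtain ⟨hu0, hun⟩ := hu
  unfold aIdx
  apply CF_headD_filter_range
  · rw [CF_len_decomp]; omega
  · show (isU (u ++ true :: v ++ false :: w) u.length
      && decide (0 ≤ pathHeight (u ++ true :: v ++ false :: w) u.length)) = true
    have h2 : pathHeight (u ++ true :: v ++ false :: w) u.length = 0 := by
      rw [CF_ph_decomp_left _ _ _ _ _ le_rfl, CF_pathHeight_length, hu0]
    have h1 : isU (u ++ true :: v ++ false :: w) u.length = true := by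
      unfold isU; rw [CF_getD_decomp_a]
    rw [h1, h2]
    norm_num
  · intro i hi
    show (isU (u ++ true :: v ++ false :: w) i
      && decide (0 ≤ pathHeight (u ++ true :: v ++ false :: w) i)) = false
    cases hb : u.getD i true with
    | false =>
      have h1 : isU (u ++ true :: v ++ false :: w) i = false := by
        unfold isU; rw [CF_getD_decomp_left _ _ _ _ _ hi, hb]
      rw [h1, Bool.false_and]
    | true =>
      have hlt : pathHeight (u ++ true :: v ++ false :: w) i < 0 := by
        rw [CF_ph_decomp_left _ _ _ _ _ (le_of_lt hi)]
        have hle := hun i (le_of_lt hi)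
        rcases eq_or_lt_of_le hle with heq | hlt
        · exfalso
          have h2 := hun (i+1) hi
          rw [CF_pathHeight_succ u hi, hb] at h2
          simp [stepVal] at h2
          omega
        · exact hlt
      have h3 : decide (0 ≤ pathHeight (u ++ true :: v ++ false :: w) i) = false :=
        decide_eq_false (not_le.mpr hlt)
      rw [h3, Bool.and_false]

lemma CF_key_bIdx (u v w : List Bool) (hu : CF_NegP u) (hv : CF_PosP v) :
    bIdx (u ++ true :: v ++ false :: w) = u.length + 1 + v.length := by
  have ha := CF_key_aIdx u v w hu hv
  obtain ⟨hu0, hun⟩ := hu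
  obtain ⟨hv0, hvn⟩ := hv
  unfold bIdx
  rw [ha]
  apply CF_headD_filter_range
  · rw [CF_len_decomp]; omega
  · show (decide (u.length < u.length + 1 + v.length)
      && isD (u ++ true :: v ++ false :: w) (u.length + 1 + v.length)
      && decide (pathHeight (u ++ true :: v ++ false :: w) (u.length + 1 + v.length) = 1)) = true
    have h1 : isD (u ++ true :: v ++ false :: w) (u.length + 1 + v.length) = true := by
      unfold isD; rw [CF_getD_decomp_b]; rfl
    have h2 : pathHeight (u ++ true :: v ++ false :: w) (u.length + 1 + v.length) = 1 := by
      rw [CF_ph_decomp_b, hu0, hv0]; simp [stepVal]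
    have h3 : decide (u.length < u.length + 1 + v.length) = true :=
      decide_eq_true (by omega)
    rw [h1, h2, h3]
    norm_num
  · intro i hi
    show (decide (u.length < i)
      && isD (u ++ true :: v ++ false :: w) i
      && decide (pathHeight (u ++ true :: v ++ false :: w) i = 1)) = false
    by_cases hia : u.length < i
    · obtain ⟨j, rfl⟩ : ∃ j, i = u.length + 1 + j := ⟨i - (u.length+1), by omega⟩
      have hj : j < v.length := by omega
      cases hb : v.getD j true with
      | true =>
        have h1 : isD (u ++ true :: v ++ false :: w) (u.length + 1 + j) = false := by
          unfold isD; rw [CF_getD_decomp_mid _ _ _ _ _ hj, hb]; rfl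
        rw [h1, Bool.and_false, Bool.false_and]
      | false =>
        have hne : pathHeight (u ++ true :: v ++ false :: w) (u.length + 1 + j) ≠ 1 := by
          rw [CF_ph_decomp_mid _ _ _ _ _ (le_of_lt hj), hu0]
          intro hcon
          simp [stepVal] at hcon
          have h2 := hvn (j+1) hj
          rw [CF_pathHeight_succ v hj, hb] at h2
          simp [stepVal] at h2
          omega
        rw [decide_eq_false hne, Bool.and_false]
    · rw [decide_eq_false hia, Bool.false_and, Bool.false_and]

lemma CF_key_fPrime (u v w : List Bool) (hu : CF_NegP u) (hv : CF_PosP v) :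
    fPrime (u ++ true :: v ++ false :: w) = v ++ false :: u ++ true :: w := by
  have ha := CF_key_aIdx u v w hu hv
  have hb := CF_key_bIdx u v w hu hv
  unfold fPrime
  rw [ha, hb]
  have e3 : u.length + 1 + v.length - u.length - 1 = v.length := by omega
  rw [CF_drop_decomp_mid, CF_take_decomp, e3, List.take_left, CF_drop_decomp_w]
  simp

/-- Position of the first flawed D-step. -/
def CF_aIdx2 (y : List Bool) : ℕ :=
  ((List.range y.length).filter (fun i => isD y i && decide (pathHeight y i ≤ 0))).headD 0

/-- Position of the first U-step after `CF_aIdx2` returning to the line `y = 0`. -/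
def CF_bIdx2 (y : List Bool) : ℕ :=
  ((List.range y.length).filter
    (fun i => decide (CF_aIdx2 y < i) && isU y i && decide (pathHeight y i = -1))).headD 0

/-- The inverse of the Chung–Feller map `fPrime`. -/
def CF_fInv (y : List Bool) : List Bool :=
  ((y.drop (CF_aIdx2 y + 1)).take (CF_bIdx2 y - CF_aIdx2 y - 1)) ++ [true] ++
    (y.take (CF_aIdx2 y)) ++ [false] ++ (y.drop (CF_bIdx2 y + 1))

lemma CF_key_aIdx2 (v u w : List Bool) (hv : CF_PosP v) (hu : CF_NegP u) :
    CF_aIdx2 (v ++ false :: u ++ true :: w) = v.length := by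
  obtain ⟨hv0, hvn⟩ := hv
  unfold CF_aIdx2
  apply CF_headD_filter_range
  · rw [CF_len_decomp]; omega
  · show (isD (v ++ false :: u ++ true :: w) v.length
      && decide (pathHeight (v ++ false :: u ++ true :: w) v.length ≤ 0)) = true
    have h2 : pathHeight (v ++ false :: u ++ true :: w) v.length = 0 := by
      rw [CF_ph_decomp_left _ _ _ _ _ le_rfl, CF_pathHeight_length, hv0]
    have h1 : isD (v ++ false :: u ++ true :: w) v.length = true := by
      unfold isD; rw [CF_getD_decomp_a]; rfl
    rw [h1, h2]
    norm_num
  · intro i hi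
    show (isD (v ++ false :: u ++ true :: w) i
      && decide (pathHeight (v ++ false :: u ++ true :: w) i ≤ 0)) = false
    cases hb : v.getD i true with
    | true =>
      have h1 : isD (v ++ false :: u ++ true :: w) i = false := by
        unfold isD; rw [CF_getD_decomp_left _ _ _ _ _ hi, hb]; rfl
      rw [h1, Bool.false_and]
    | false =>
      have hlt : 0 < pathHeight (v ++ false :: u ++ true :: w) i := by
        rw [CF_ph_decomp_left _ _ _ _ _ (le_of_lt hi)]
        have hle := hvn i (le_of_lt hi)
        rcases eq_or_lt_of_le hle with heq | hlt
        · exfalso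
          have h2 := hvn (i+1) hi
          rw [CF_pathHeight_succ v hi, hb] at h2
          simp [stepVal] at h2
          omega
        · exact hlt
      have h3 : decide (pathHeight (v ++ false :: u ++ true :: w) i ≤ 0) = false :=
        decide_eq_false (not_le.mpr hlt)
      rw [h3, Bool.and_false]

lemma CF_key_bIdx2 (v u w : List Bool) (hv : CF_PosP v) (hu : CF_NegP u) :
    CF_bIdx2 (v ++ false :: u ++ true :: w) = v.length + 1 + u.length := by
  have ha := CF_key_aIdx2 v u w hv hu
  obtain ⟨hv0, hvn⟩ := hv
  obtain ⟨hu0, hun⟩ := hu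
  unfold CF_bIdx2
  rw [ha]
  apply CF_headD_filter_range
  · rw [CF_len_decomp]; omega
  · show (decide (v.length < v.length + 1 + u.length)
      && isU (v ++ false :: u ++ true :: w) (v.length + 1 + u.length)
      && decide (pathHeight (v ++ false :: u ++ true :: w) (v.length + 1 + u.length) = -1)) = true
    have h1 : isU (v ++ false :: u ++ true :: w) (v.length + 1 + u.length) = true := by
      unfold isU; rw [CF_getD_decomp_b]
    have h2 : pathHeight (v ++ false :: u ++ true :: w) (v.length + 1 + u.length) = -1 := by
      rw [CF_ph_decomp_b, hv0, hu0]; simp [stepVal]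
    have h3 : decide (v.length < v.length + 1 + u.length) = true :=
      decide_eq_true (by omega)
    rw [h1, h2, h3]
    norm_num
  · intro i hi
    show (decide (v.length < i)
      && isU (v ++ false :: u ++ true :: w) i
      && decide (pathHeight (v ++ false :: u ++ true :: w) i = -1)) = false
    by_cases hia : v.length < i
    · obtain ⟨j, rfl⟩ : ∃ j, i = v.length + 1 + j := ⟨i - (v.length+1), by omega⟩
      have hj : j < u.length := by omega
      cases hb : u.getD j true with
      | false =>
        have h1 : isU (v ++ false :: u ++ true :: w) (v.length + 1 + j) = false := by
          unfold isU; rw [CF_getD_decomp_mid _ _ _ _ _ hj, hb]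
        rw [h1, Bool.and_false, Bool.false_and]
      | true =>
        have hne : pathHeight (v ++ false :: u ++ true :: w) (v.length + 1 + j) ≠ -1 := by
          rw [CF_ph_decomp_mid _ _ _ _ _ (le_of_lt hj), hv0]
          intro hcon
          simp [stepVal] at hcon
          have h2 := hun (j+1) hj
          rw [CF_pathHeight_succ u hj, hb] at h2
          simp [stepVal] at h2
          omega
        rw [decide_eq_false hne, Bool.and_false]
    · rw [decide_eq_false hia, Bool.false_and, Bool.false_and]

lemma CF_key_fInv (v u w : List Bool) (hv : CF_PosP v) (hu : CF_NegP u) :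
    CF_fInv (v ++ false :: u ++ true :: w) = u ++ true :: v ++ false :: w := by
  have ha := CF_key_aIdx2 v u w hv hu
  have hb := CF_key_bIdx2 v u w hv hu
  unfold CF_fInv
  rw [ha, hb]
  have e3 : v.length + 1 + u.length - v.length - 1 = u.length := by omega
  rw [CF_drop_decomp_mid, CF_take_decomp, e3, List.take_left, CF_drop_decomp_w]
  simp

lemma CF_exists_decomp (k e : ℕ) (x : List Bool) (hlen : x.length = 2*k)
    (hcnt : x.count true = k) (hfl : flaws x = e) (he : e < k) :
    ∃ u v w, CF_NegP u ∧ CF_PosP v ∧ x = u ++ true :: v ++ false :: w := by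
  classical
  have hcf : x.count false = k := by have := CF_count_add x; omega
  have hs : CF_hsum x = 0 := by rw [CF_hsum_eq_counts, hcnt, hcf]; ring
  have hphlen : pathHeight x x.length = 0 := by rw [CF_pathHeight_length, hs]
  have hexU : ∃ m, m < x.length ∧ x.getD m true = true ∧ 0 ≤ pathHeight x m := by
    by_contra hcon
    push_neg at hcon
    have hall : ∀ i ≤ x.length, pathHeight x i ≤ 0 := CF_heights_nonpos x le_rfl hcon
    have hfc : flaws x = x.count false := by
      rw [CF_flaws_eq_flf]
      apply CF_flf_eq_count
      intro i hi
      simpa using hall i hi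
    omega
  set a := Nat.find hexU with hadef
  obtain ⟨ha1, ha2, ha3⟩ := Nat.find_spec hexU
  have hbefore : ∀ i < a, x.getD i true = true → pathHeight x i < 0 := by
    intro i hia hgd
    have hmin := Nat.find_min hexU hia
    push_neg at hmin
    exact hmin (lt_trans hia ha1) hgd
  have hupto : ∀ i ≤ a, pathHeight x i ≤ 0 := CF_heights_nonpos x (le_of_lt ha1) hbefore
  have hpha : pathHeight x a = 0 := le_antisymm (hupto a le_rfl) ha3
  have hpha1 : pathHeight x (a+1) = 1 := by
    rw [CF_pathHeight_succ x ha1, ha2, hpha]; simp [stepVal]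
  obtain ⟨j0, hj0a, hj0n, hj0d, hj0h, _⟩ :=
    CF_exists_cross_down x (show a+1 ≤ x.length by omega) le_rfl (by omega) (le_of_eq hphlen)
  have hexB : ∃ j, a < j ∧ j < x.length ∧ x.getD j true = false ∧ pathHeight x j = 1 :=
    ⟨j0, by omega, hj0n, hj0d, hj0h⟩
  set b := Nat.find hexB with hbdef
  obtain ⟨hb1, hb2, hb3, hb4⟩ := Nat.find_spec hexB
  have hmid : ∀ j, a < j → j ≤ b → 1 ≤ pathHeight x j := by
    intro j hja hjb
    by_contra hcon
    push_neg at hcon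
    obtain ⟨j2, hj2i, hj2n, hj2d, hj2h, _⟩ :=
      CF_exists_cross_down x (show a+1 ≤ j by omega) (by omega) (by omega) (by omega)
    exact Nat.find_min hexB (show j2 < b by omega) ⟨by omega, by omega, hj2d, hj2h⟩
  refine ⟨x.take a, (x.drop (a+1)).take (b - (a+1)), x.drop (b+1), ?_, ?_, ?_⟩
  · constructor
    · rw [CF_hsum_take _ (le_of_lt ha1), hpha]
    · intro i hi
      have hia : i ≤ a := by
        rw [List.length_take] at hi; omega
      rw [CF_ph_take x hia]
      exact hupto i hia
  · have hvlen : ((x.drop (a+1)).take (b - (a+1))).length = b - (a+1) := by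
      rw [List.length_take, List.length_drop]; omega
    have hph : ∀ j ≤ b - (a+1),
        pathHeight ((x.drop (a+1)).take (b - (a+1))) j = pathHeight x (a+1+j) - 1 := by
      intro j hj
      rw [CF_ph_take _ hj]
      have := CF_ph_add x (a+1) j
      rw [hpha1] at this
      omega
    constructor
    · rw [← CF_pathHeight_length, hvlen, hph _ le_rfl]
      have : a + 1 + (b - (a+1)) = b := by omega
      rw [this, hb4]
      ring
    · intro i hi
      rw [hvlen] at hi
      rw [hph i hi]
      have := hmid (a+1+i) (by omega) (by omega)
      omega
  · have hsurg := CF_surgery x hb1 hb2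
    rw [ha2, hb3] at hsurg
    exact hsurg

lemma CF_exists_decomp2 (y : List Bool) (hs : CF_hsum y = 0) (hfl : 0 < flaws y) :
    ∃ v u w, CF_PosP v ∧ CF_NegP u ∧ y = v ++ false :: u ++ true :: w := by
  classical
  have hphlen : pathHeight y y.length = 0 := by rw [CF_pathHeight_length, hs]
  have hexD : ∃ m, m < y.length ∧ y.getD m true = false ∧ pathHeight y m ≤ 0 := by
    unfold flaws at hfl
    obtain ⟨i, hmem⟩ := List.exists_mem_of_length_pos hfl
    rw [List.mem_filter] at hmem
    obtain ⟨hr, hp⟩ := hmem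
    rw [List.mem_range] at hr
    have := hp
    simp only [isD, Bool.and_eq_true, Bool.not_eq_true', decide_eq_true_eq] at this
    exact ⟨i, hr, this.1, this.2⟩
  set a := Nat.find hexD with hadef
  obtain ⟨ha1, ha2, ha3⟩ := Nat.find_spec hexD
  have hbefore : ∀ i < a, y.getD i true = false → 0 < pathHeight y i := by
    intro i hia hgd
    have hmin := Nat.find_min hexD hia
    push_neg at hmin
    have := hmin (lt_trans hia ha1) hgd
    omega
  have hupto : ∀ i ≤ a, 0 ≤ pathHeight y i := CF_heights_nonneg y (le_of_lt ha1) hbefore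
  have hpha : pathHeight y a = 0 := le_antisymm ha3 (hupto a le_rfl)
  have hpha1 : pathHeight y (a+1) = -1 := by
    rw [CF_pathHeight_succ y ha1, ha2, hpha]; simp [stepVal]
  obtain ⟨j0, hj0a, hj0n, hj0d, hj0h, _⟩ :=
    CF_exists_cross_up y (show a+1 ≤ y.length by omega) le_rfl (by omega) (le_of_eq hphlen.symm)
  have hexB : ∃ j, a < j ∧ j < y.length ∧ y.getD j true = true ∧ pathHeight y j = -1 :=
    ⟨j0, by omega, hj0n, hj0d, hj0h⟩
  set b := Nat.find hexB with hbdef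
  obtain ⟨hb1, hb2, hb3, hb4⟩ := Nat.find_spec hexB
  have hmid : ∀ j, a < j → j ≤ b → pathHeight y j ≤ -1 := by
    intro j hja hjb
    by_contra hcon
    push_neg at hcon
    obtain ⟨j2, hj2i, hj2n, hj2d, hj2h, _⟩ :=
      CF_exists_cross_up y (show a+1 ≤ j by omega) (by omega) (by omega) (by omega)
    exact Nat.find_min hexB (show j2 < b by omega) ⟨by omega, by omega, hj2d, hj2h⟩
  refine ⟨y.take a, (y.drop (a+1)).take (b - (a+1)), y.drop (b+1), ?_, ?_, ?_⟩
  · constructor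
    · rw [CF_hsum_take _ (le_of_lt ha1), hpha]
    · intro i hi
      have hia : i ≤ a := by
        rw [List.length_take] at hi; omega
      rw [CF_ph_take y hia]
      exact hupto i hia
  · have hvlen : ((y.drop (a+1)).take (b - (a+1))).length = b - (a+1) := by
      rw [List.length_take, List.length_drop]; omega
    have hph : ∀ j ≤ b - (a+1),
        pathHeight ((y.drop (a+1)).take (b - (a+1))) j = pathHeight y (a+1+j) + 1 := by
      intro j hj
      rw [CF_ph_take _ hj]
      have := CF_ph_add y (a+1) j
      rw [hpha1] at this
      omega
    constructor
    · rw [← CF_pathHeight_length, hvlen, hph _ le_rfl]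
      have : a + 1 + (b - (a+1)) = b := by omega
      rw [this, hb4]
      ring
    · intro i hi
      rw [hvlen] at hi
      rw [hph i hi]
      have := hmid (a+1+i) (by omega) (by omega)
      omega
  · have hsurg := CF_surgery y hb1 hb2
    rw [ha2, hb3] at hsurg
    exact hsurg

lemma CF_flf_expand (p q r : List Bool) (s t : Bool) (c : ℤ) :
    CF_flf c (p ++ ((s :: q) ++ (t :: r))) =
      CF_flf c p + ((if s = false ∧ c + CF_hsum p ≤ 0 then 1 else 0)
        + (CF_flf (c + CF_hsum p + stepVal s) q
        + ((if t = false ∧ c + CF_hsum p + stepVal s + CF_hsum q ≤ 0 then 1 else 0)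
        + CF_flf (c + CF_hsum p + stepVal s + CF_hsum q + stepVal t) r))) := by
  rw [CF_flf_append, List.cons_append, CF_flf, CF_flf_append, CF_flf]

lemma CF_flaws_decomp (u v w : List Bool) (hu : CF_NegP u) (hv : CF_PosP v) :
    flaws (v ++ false :: u ++ true :: w) = flaws (u ++ true :: v ++ false :: w) + 1 := by
  obtain ⟨hu0, hun⟩ := hu
  obtain ⟨hv0, hvn⟩ := hv
  have hcu0 : CF_flf 0 u = u.count false :=
    CF_flf_eq_count u 0 (by intro i hi; simpa using hun i hi)
  have hcum : CF_flf (-1) u = u.count false :=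
    CF_flf_eq_count u (-1) (by intro i hi; have := hun i hi; linarith)
  have hv0' : CF_flf 0 v = 0 :=
    CF_flf_eq_zero v 0 (by intro i hi; simpa using hvn i hi)
  have hv1' : CF_flf 1 v = 0 :=
    CF_flf_eq_zero v 1 (by intro i hi; have := hvn i hi; linarith)
  rw [CF_flaws_eq_flf, CF_flaws_eq_flf, CF_g1 u v w true false, CF_g1 v u w false true,
    CF_flf_expand, CF_flf_expand, hu0, hv0]
  norm_num [stepVal]
  rw [hcu0, hcum, hv0', hv1']
  omega

theorem fPrime_bijection' (k e : ℕ) (he : e < k) :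
    Set.BijOn fPrime (DyckSet k e) (DyckSet k (e+1)) := by
  have hmem1 : ∀ x ∈ DyckSet k e,
      ∃ u v w, CF_NegP u ∧ CF_PosP v ∧ x = u ++ true :: v ++ false :: w := by
    intro x hx
    obtain ⟨h1, h2, h3⟩ := hx
    exact CF_exists_decomp k e x h1 h2 h3 he
  have hmem2 : ∀ y ∈ DyckSet k (e+1),
      ∃ v u w, CF_PosP v ∧ CF_NegP u ∧ y = v ++ false :: u ++ true :: w := by
    intro y hy
    obtain ⟨h1, h2, h3⟩ := hy
    apply CF_exists_decomp2
    · have hca := CF_count_add y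
      have hcf : y.count false = k := by omega
      rw [CF_hsum_eq_counts, h2, hcf]
      ring
    · omega
  have maps1 : Set.MapsTo fPrime (DyckSet k e) (DyckSet k (e+1)) := by
    intro x hx
    obtain ⟨u, v, w, hu, hv, hxx⟩ := hmem1 x hx
    obtain ⟨h1, h2, h3⟩ := hx
    rw [hxx] at h1 h2 h3 ⊢
    rw [CF_key_fPrime u v w hu hv]
    refine ⟨?_, ?_, ?_⟩
    · rw [← h1]; simp; omega
    · rw [← h2]; simp [List.count_cons]; omega
    · rw [CF_flaws_decomp u v w hu hv, h3]
  have inv1 : ∀ x ∈ DyckSet k e, CF_fInv (fPrime x) = x := by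
    intro x hx
    obtain ⟨u, v, w, hu, hv, hxx⟩ := hmem1 x hx
    rw [hxx, CF_key_fPrime u v w hu hv, CF_key_fInv v u w hv hu]
  have maps2 : Set.MapsTo CF_fInv (DyckSet k (e+1)) (DyckSet k e) := by
    intro y hy
    obtain ⟨v, u, w, hv, hu, hyy⟩ := hmem2 y hy
    obtain ⟨h1, h2, h3⟩ := hy
    rw [hyy] at h1 h2 h3 ⊢
    rw [CF_key_fInv v u w hv hu]
    have hfd := CF_flaws_decomp u v w hu hv
    refine ⟨?_, ?_, ?_⟩
    · rw [← h1]; simp; omega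
    · rw [← h2]; simp [List.count_cons]; omega
    · omega
  have inv2 : ∀ y ∈ DyckSet k (e+1), fPrime (CF_fInv y) = y := by
    intro y hy
    obtain ⟨v, u, w, hv, hu, hyy⟩ := hmem2 y hy
    rw [hyy, CF_key_fInv v u w hv hu, CF_key_fPrime u v w hu hv]
  exact Set.InvOn.bijOn ⟨inv1, inv2⟩ maps1 maps2

theorem fPrime_bijection (k e : ℕ) (he : e < k) :
    Set.BijOn fPrime (DyckSet k e) (DyckSet k (e+1)) := by
  exact fPrime_bijection' k e he
end

section
/- The map g, which flips the (d_0(x)+1)-th D-step touching the line y=0 of a path x, is a well-defined bijection from L_{2k,k} \ D_{2k}^k to L_{2k,k+1}, and its inverse is the map h', which flips the (u_1(x')+1)-th U-step touching the line y=1 of a path x' ∈ L_{2k,k+1}. -/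
namespace GBij

def cnt (P : ℕ → Bool) (t : ℕ) : ℕ := ((List.range t).filter P).length

lemma cnt_succ (P : ℕ → Bool) (t : ℕ) :
    cnt P (t+1) = cnt P t + if P t then 1 else 0 := by
  simp only [cnt, List.range_succ, List.filter_append, List.length_append]
  split <;> simp_all [List.filter_cons]

lemma cnt_congr {P Q : ℕ → Bool} {t : ℕ} (h : ∀ i < t, P i = Q i) : cnt P t = cnt Q t := by
  unfold cnt
  rw [List.filter_congr (fun i hi => by rw [h i (List.mem_range.mp hi)])]

lemma cnt_mono (P : ℕ → Bool) {s t : ℕ} (h : s ≤ t) : cnt P s ≤ cnt P t := by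
  induction t with
  | zero => simp_all
  | succ t ih =>
    rcases Nat.lt_or_ge s (t+1) with h'|h'
    · have := ih (by omega)
      rw [cnt_succ]; split <;> omega
    · have : s = t + 1 := by omega
      simp [this]

lemma cnt_pos (P : ℕ → Bool) {i t : ℕ} (hi : i < t) (hP : P i = true) : 1 ≤ cnt P t := by
  have h1 : cnt P (i+1) = cnt P i + 1 := by rw [cnt_succ, hP]; simp
  have := cnt_mono P (show i + 1 ≤ t by omega)
  omega

lemma exists_of_cnt_pos {P : ℕ → Bool} {t : ℕ} (h : 1 ≤ cnt P t) : ∃ i, i < t ∧ P i = true := by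
  by_contra hc
  push_neg at hc
  have h2 : cnt P t = cnt (fun _ => false) t := cnt_congr (by simpa using fun i hi => hc i hi)
  have h0 : cnt (fun _ : ℕ => false) t = 0 := by simp [cnt]
  omega

lemma cnt_or {A B : ℕ → Bool} (hd : ∀ i, ¬(A i = true ∧ B i = true)) (t : ℕ) :
    cnt (fun i => A i || B i) t = cnt A t + cnt B t := by
  induction t with
  | zero => simp [cnt]
  | succ t ih =>
    rw [cnt_succ, cnt_succ, cnt_succ, ih]
    have := hd t
    cases hA : A t <;> cases hB : B t <;> simp_all <;> omega

lemma cnt_and_le (A B : ℕ → Bool) (t : ℕ) :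
    cnt (fun i => A i && B i) t ≤ cnt A t := by
  induction t with
  | zero => simp [cnt]
  | succ t ih =>
    rw [cnt_succ, cnt_succ]
    cases hA : A t <;> cases hB : B t <;> simp_all <;> omega

lemma exists_of_cnt_lt {A B : ℕ → Bool} {t : ℕ}
    (h : cnt (fun i => A i && B i) t < cnt A t) :
    ∃ i, i < t ∧ A i = true ∧ B i = false := by
  by_contra hc
  push_neg at hc
  have : cnt (fun i => A i && B i) t = cnt A t := by
    apply cnt_congr
    intro i hi
    cases hA : A i
    · simp
    · have := hc i hi hA
      simp_all
  omega

end GBij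

namespace GBij2
open GBij

lemma pathHeight_zero (x : List Bool) : pathHeight x 0 = 0 := rfl

lemma getD_eq_getElem (x : List Bool) (t : ℕ) (ht : t < x.length) :
    x.getD t true = x[t] := by
  simp [List.getD_eq_getElem?_getD, List.getElem?_eq_getElem ht]

lemma pathHeight_succ (x : List Bool) (t : ℕ) (ht : t < x.length) :
    pathHeight x (t+1) = pathHeight x t + stepVal (x.getD t true) := by
  unfold pathHeight
  rw [List.take_succ, List.getElem?_eq_getElem ht, List.map_append, List.sum_append,
    getD_eq_getElem x t ht]
  simp

lemma sum_map_stepVal (x : List Bool) :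
    (x.map stepVal).sum = 2 * (x.count true : ℤ) - x.length := by
  induction x with
  | nil => simp
  | cons a l ih =>
    simp only [List.map_cons, List.sum_cons, ih, List.count_cons, List.length_cons]
    cases a <;> simp [stepVal] <;> push_cast <;> ring

lemma pathHeight_length (x : List Bool) :
    pathHeight x x.length = 2 * (x.count true : ℤ) - x.length := by
  rw [show pathHeight x x.length = (x.map stepVal).sum by simp [pathHeight]]
  exact sum_map_stepVal x

/-- The fundamental crossing lemma. -/
lemma cross (x : List Bool) (c d : ℤ) (hd : d = c + 1) :
    ∀ t, t ≤ x.length →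
    (cnt (fun i => isU x i && decide (pathHeight x i = c)) t : ℤ)
      - cnt (fun i => isD x i && decide (pathHeight x i = d)) t
    = (if c < pathHeight x t then 1 else 0) - (if c < 0 then 1 else 0) := by
  subst hd
  intro t
  induction t with
  | zero => intro _; simp [cnt, pathHeight_zero]; by_cases hc : c < 0 <;> simp [hc]
  | succ t ih =>
    intro ht
    have ht' : t < x.length := by omega
    have hstep := pathHeight_succ x t ht'
    have hthis := ih (by omega)
    rw [cnt_succ, cnt_succ]
    push_cast
    cases hxt : x.getD t true
    · -- D step
      have hU : isU x t = false := hxt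
      have hD : isD x t = true := by rw [isD, hxt]; rfl
      rw [hxt] at hstep
      norm_num [stepVal] at hstep
      simp only [hU, hD, Bool.false_and, Bool.true_and, hstep,
        Bool.false_eq_true, if_false, if_true, decide_eq_true_eq]
      split_ifs at hthis ⊢ <;> omega
    · -- U step
      have hU : isU x t = true := hxt
      have hD : isD x t = false := by rw [isD, hxt]; rfl
      rw [hxt] at hstep
      norm_num [stepVal] at hstep
      simp only [hU, hD, Bool.false_and, Bool.true_and, hstep,
        Bool.false_eq_true, if_false, if_true, decide_eq_true_eq]
      split_ifs at hthis ⊢ <;> omega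

end GBij2

namespace GBij3
open GBij GBij2

/-- Interval count over `[s, t)`. -/
def cntB (P : ℕ → Bool) (s t : ℕ) : ℕ := ((List.range' s (t - s)).filter P).length

lemma range_split (p n : ℕ) (h : p ≤ n) :
    List.range n = List.range p ++ List.range' p (n - p) := by
  rw [List.range_eq_range', List.range_eq_range']
  have := List.range'_append (s := 0) (m := p) (n := n - p) (step := 1)
  simp only [Nat.zero_add, Nat.one_mul] at this
  calc List.range' 0 n = List.range' 0 (n - p + p) := by rw [show n - p + p = n by omega]
    _ = List.range' 0 p ++ List.range' p (n - p) := by rw [Nat.add_comm] at this; exact this.symm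

lemma cnt_split (P : ℕ → Bool) {s t : ℕ} (h : s ≤ t) :
    cnt P t = cnt P s + cntB P s t := by
  unfold cnt cntB
  rw [range_split s t h, List.filter_append, List.length_append]

lemma cntB_congr {P Q : ℕ → Bool} {s t : ℕ} (h : ∀ i, s ≤ i → i < t → P i = Q i) :
    cntB P s t = cntB Q s t := by
  unfold cntB
  rw [List.filter_congr]
  intro i hi
  rw [List.mem_range'_1] at hi
  rw [h i hi.1 (by omega)]

/-- Interval crossing lemma. -/
lemma crossB (x : List Bool) (c d : ℤ) (hd : d = c + 1) {s t : ℕ} (hs : s ≤ t)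
    (ht : t ≤ x.length) :
    (cntB (fun i => isU x i && decide (pathHeight x i = c)) s t : ℤ)
      - cntB (fun i => isD x i && decide (pathHeight x i = d)) s t
    = (if c < pathHeight x t then 1 else 0) - (if c < pathHeight x s then 1 else 0) := by
  have h1 := cross x c d hd t ht
  have h2 := cross x c d hd s (by omega)
  have e1 := cnt_split (fun i => isU x i && decide (pathHeight x i = c)) hs
  have e2 := cnt_split (fun i => isD x i && decide (pathHeight x i = d)) hs
  split_ifs at h1 h2 ⊢ <;> omega

/-- Characterization of `getD j` of a filtered range, direction 1. -/
lemma getD_filter_range {n : ℕ} {P : ℕ → Bool} {j : ℕ} (hj : j < cnt P n) :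
    P (((List.range n).filter P).getD j 0) = true ∧
    ((List.range n).filter P).getD j 0 < n ∧
    cnt P (((List.range n).filter P).getD j 0) = j := by
  induction n with
  | zero => simp [cnt] at hj
  | succ n ih =>
    rw [List.range_succ, List.filter_append]
    by_cases h : j < cnt P n
    · rw [List.getD_append _ _ _ _ h]
      obtain ⟨h1, h2, h3⟩ := ih h
      exact ⟨h1, by omega, h3⟩
    · have hsucc := cnt_succ P n
      have hPn : P n = true := by
        by_contra hPn
        simp only [Bool.not_eq_true] at hPn
        rw [hPn] at hsucc
        simp at hsucc
        omega
      have hje : j = cnt P n := by rw [hsucc, hPn] at hj; simp at hj; omega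
      have hfil : List.filter P [n] = [n] := by simp [hPn]
      rw [hfil, List.getD_append_right _ _ _ _ (by rw [hje]; exact le_refl _)]
      have : j - ((List.range n).filter P).length = 0 := by
        have : cnt P n = ((List.range n).filter P).length := rfl
        omega
      rw [this]
      exact ⟨hPn, by simp, by rw [hje]; rfl⟩

/-- Characterization of `getD j` of a filtered range, uniqueness direction. -/
lemma getD_filter_range_eq {n p j : ℕ} {P : ℕ → Bool} (hp : p < n) (hP : P p = true)
    (hc : cnt P p = j) : ((List.range n).filter P).getD j 0 = p := by
  have hsp : cnt P (p+1) = j + 1 := by rw [cnt_succ, hP, hc]; simp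
  have hlen : j < cnt P n := by
    have := cnt_mono P (show p + 1 ≤ n by omega)
    omega
  obtain ⟨h1, h2, h3⟩ := getD_filter_range hlen
  set q := ((List.range n).filter P).getD j 0 with hq
  rcases Nat.lt_trichotomy q p with h | h | h
  · have hsq : cnt P (q+1) = j + 1 := by rw [cnt_succ, h1, h3]; simp
    have := cnt_mono P (show q + 1 ≤ p by omega)
    omega
  · omega
  · have := cnt_mono P (show p + 1 ≤ q by omega)
    omega

end GBij3

namespace GBij4
open GBij GBij2 GBij3

lemma getD_set_self {x : List Bool} {p : ℕ} (hp : p < x.length) (b : Bool) :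
    (x.set p b).getD p true = b := by
  simp [List.getD_eq_getElem?_getD, List.getElem?_set, hp]

lemma getD_set_ne (x : List Bool) {p i : ℕ} (b : Bool) (h : p ≠ i) :
    (x.set p b).getD i true = x.getD i true := by
  simp [List.getD_eq_getElem?_getD, List.getElem?_set, h]

lemma isU_set_self {x : List Bool} {p : ℕ} (hp : p < x.length) (b : Bool) :
    isU (x.set p b) p = b := getD_set_self hp b

lemma isU_set_ne (x : List Bool) {p i : ℕ} (b : Bool) (h : p ≠ i) :
    isU (x.set p b) i = isU x i := getD_set_ne x b h

lemma isD_set_self {x : List Bool} {p : ℕ} (hp : p < x.length) (b : Bool) :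
    isD (x.set p b) p = !b := by rw [isD, getD_set_self hp]

lemma isD_set_ne (x : List Bool) {p i : ℕ} (b : Bool) (h : p ≠ i) :
    isD (x.set p b) i = isD x i := by rw [isD, getD_set_ne x b h]; rfl

lemma pathHeight_set {x : List Bool} {p : ℕ} (hp : p < x.length) (b : Bool) :
    ∀ i, i ≤ x.length →
      pathHeight (x.set p b) i
        = pathHeight x i + (if p < i then stepVal b - stepVal (x.getD p true) else 0) := by
  intro i
  induction i with
  | zero => intro _; simp [pathHeight_zero]
  | succ i ih =>
    intro hi
    have hi' : i < x.length := by omega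
    have hlen : i < (x.set p b).length := by simp [hi']
    rw [pathHeight_succ _ _ (by simpa using hi'), pathHeight_succ _ _ hi', ih (by omega)]
    by_cases hpi : p = i
    · subst hpi
      rw [getD_set_self hp, if_neg (show ¬ p < p by omega), if_pos (show p < p + 1 by omega)]
      ring
    · rw [getD_set_ne x b hpi]
      by_cases h3 : p < i
      · rw [if_pos h3, if_pos (by omega)]
        ring
      · rw [if_neg h3, if_neg (by omega)]
        ring

lemma set_eq_self {x : List Bool} {p : ℕ} {b : Bool} (h : x.getD p true = b)
    (hp : p < x.length) : x.set p b = x := by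
  apply List.ext_getElem?
  intro i
  rw [List.getElem?_set]
  by_cases h1 : p = i
  · subst h1
    rw [if_pos rfl, if_pos hp, List.getElem?_eq_getElem hp, ← getD_eq_getElem x p hp, h]
  · rw [if_neg h1]

lemma count_set_true {x : List Bool} {p : ℕ} (hp : p < x.length)
    (h : x.getD p true = false) : (x.set p true).count true = x.count true + 1 := by
  rw [List.count_set hp]
  rw [getD_eq_getElem x p hp] at h
  simp [h]

lemma count_set_false {x : List Bool} {p : ℕ} (hp : p < x.length)
    (h : x.getD p true = true) : (x.set p false).count true = x.count true - 1 := by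
  rw [List.count_set hp]
  rw [getD_eq_getElem x p hp] at h
  simp [h]

lemma cnt_shift (P : ℕ → Bool) (t : ℕ) :
    cnt P (t+1) = (if P 0 then 1 else 0) + cnt (fun i => P (i+1)) t := by
  unfold cnt
  rw [List.range_succ_eq_map, List.filter_cons, List.filter_map]
  split <;> simp [Function.comp_def] <;> omega

lemma cnt_isU (x : List Bool) : cnt (isU x) x.length = x.count true := by
  induction x with
  | nil => simp [cnt]
  | cons a l ih =>
    rw [show (a :: l).length = l.length + 1 from rfl, cnt_shift]
    have hs : ∀ i < l.length, isU (a :: l) (i+1) = isU l i := fun i _ => rfl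
    rw [cnt_congr hs, ih]
    have h0 : isU (a :: l) 0 = a := rfl
    rw [h0]
    cases a <;> simp [List.count_cons] <;> omega

lemma cnt_isD (x : List Bool) : cnt (isD x) x.length = x.length - x.count true := by
  have htot : cnt (fun i => isU x i || isD x i) x.length = x.length := by
    have : ∀ i < x.length, (isU x i || isD x i) = (fun _ => true) i := by
      intro i _; simp [isU, isD]
    rw [cnt_congr this]
    simp [cnt, List.filter_true]
  have hdisj : ∀ i : ℕ, ¬(isU x i = true ∧ isD x i = true) := by
    intro i ⟨h1, h2⟩
    rw [isU] at h1; rw [isD, h1] at h2; simp at h2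
  have hor := cnt_or hdisj x.length
  have hc := cnt_isU x
  omega

end GBij4

namespace GBijMain
open GBij GBij2 GBij3 GBij4

lemma dstart_eq (x : List Bool) (c : ℤ) :
    dstart x c = cnt (fun i => isD x i && decide (pathHeight x i = c)) x.length := rfl

lemma ustart_eq (x : List Bool) (c : ℤ) :
    ustart x c = cnt (fun i => isU x i && decide (pathHeight x i = c)) x.length := rfl

lemma flaws_eq (x : List Bool) :
    flaws x = cnt (fun i => isD x i && decide (pathHeight x i ≤ 0)) x.length := rfl

lemma forward {k : ℕ} {x : List Bool} (hl : x.length = 2*k) (hc : x.count true = k)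
    (hf : flaws x ≠ k) :
    (gMap x).length = 2*k ∧ (gMap x).count true = k + 1 ∧ h'Map (gMap x) = x := by
  have hend : pathHeight x x.length = 0 := by
    rw [pathHeight_length x, hl, hc]; push_cast; ring
  have hDtot : cnt (isD x) x.length = k := by rw [cnt_isD x, hc]; omega
  -- there is a D-step at height ≥ 1
  have hflt : cnt (fun i => isD x i && decide (pathHeight x i ≤ 0)) x.length
      < cnt (isD x) x.length := by
    have h1 := cnt_and_le (isD x) (fun i => decide (pathHeight x i ≤ 0)) x.length
    have hfe := flaws_eq x
    omega
  obtain ⟨i0, hi0n, hi0D, hi0h⟩ := exists_of_cnt_lt hflt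
  have hi0h' : ¬ pathHeight x i0 ≤ 0 := by simpa using hi0h
  -- a D-step starting at height 1 exists
  have hcb := crossB x 0 1 (by norm_num) (show i0 ≤ x.length by omega) (le_refl x.length)
  have hd1 : 1 ≤ cnt (fun i => isD x i && decide (pathHeight x i = 1)) x.length := by
    have hsp := cnt_split (fun i => isD x i && decide (pathHeight x i = 1))
      (show i0 ≤ x.length by omega)
    rw [hend] at hcb
    split_ifs at hcb <;> omega
  -- splitting the dtouch predicate
  have hPdsplit : ∀ t, cnt (fun i => isD x i
        && (decide (pathHeight x i = 0) || decide (pathHeight x i = 0+1))) t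
      = cnt (fun i => isD x i && decide (pathHeight x i = 0)) t
        + cnt (fun i => isD x i && decide (pathHeight x i = 1)) t := by
    intro t
    have hcongr : ∀ i < t, (isD x i
        && (decide (pathHeight x i = 0) || decide (pathHeight x i = 0+1)))
        = ((isD x i && decide (pathHeight x i = 0))
            || (isD x i && decide (pathHeight x i = 1))) := by
      intro i _
      norm_num [Bool.and_or_distrib_left]
    rw [cnt_congr hcongr, cnt_or]
    intro i ⟨h1, h2⟩
    simp only [Bool.and_eq_true, decide_eq_true_eq] at h1 h2
    omega
  have hj : dstart x 0 < cnt (fun i => isD x i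
      && (decide (pathHeight x i = 0) || decide (pathHeight x i = 0+1))) x.length := by
    rw [dstart_eq, hPdsplit]
    omega
  obtain ⟨hPdp, hpn, hcntp⟩ := getD_filter_range hj
  set p := gIdx x with hpdef
  have hgi : ((List.range x.length).filter (fun i => isD x i
      && (decide (pathHeight x i = 0) || decide (pathHeight x i = 0+1)))).getD (dstart x 0) 0
      = p := rfl
  rw [hgi] at hPdp hpn hcntp
  simp only [Bool.and_eq_true, Bool.or_eq_true, decide_eq_true_eq] at hPdp
  obtain ⟨hDp, hphp⟩ := hPdp
  have hph01 : pathHeight x p = 0 ∨ pathHeight x p = 1 := by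
    rcases hphp with h | h
    · exact Or.inl h
    · right; omega
  have hxp : x.getD p true = false := by
    rw [isD] at hDp
    cases h : x.getD p true
    · rfl
    · rw [h] at hDp; simp at hDp
  have hgm : gMap x = x.set p true := rfl
  have hlen' : (gMap x).length = x.length := by rw [hgm, List.length_set]
  have hcount' : (gMap x).count true = k + 1 := by
    rw [hgm, count_set_true hpn hxp, hc]
  refine ⟨by rw [hlen', hl], hcount', ?_⟩
  -- heights of x' = gMap x
  have hH : ∀ i ≤ x.length, pathHeight (gMap x) i
      = pathHeight x i + (if p < i then 2 else 0) := by
    intro i hi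
    rw [hgm, pathHeight_set hpn true i hi, hxp]
    norm_num [stepVal]
  have hstep_p : pathHeight x (p+1) = pathHeight x p - 1 := by
    have hsv : stepVal false = -1 := rfl
    rw [pathHeight_succ x p hpn, hxp, hsv]
    ring
  -- the utouch predicate of gMap x at p holds
  have hQup : (isU (gMap x) p
      && (decide (pathHeight (gMap x) p = 1) || decide (pathHeight (gMap x) p = 1-1))) = true := by
    rw [hgm, isU_set_self hpn true, ← hgm, hH p (by omega)]
    rcases hph01 with h | h <;> simp [h]
  -- count of utouch-predicate below p
  have hcntQ : cnt (fun i => isU (gMap x) i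
      && (decide (pathHeight (gMap x) i = 1) || decide (pathHeight (gMap x) i = 1-1))) p
      = cnt (fun i => isU x i && decide (pathHeight x i = 1)) p
        + cnt (fun i => isU x i && decide (pathHeight x i = 0)) p := by
    have hcongr : ∀ i < p, (isU (gMap x) i
        && (decide (pathHeight (gMap x) i = 1) || decide (pathHeight (gMap x) i = 1-1)))
        = ((isU x i && decide (pathHeight x i = 1)) || (isU x i && decide (pathHeight x i = 0))) := by
      intro i hi
      rw [hgm, isU_set_ne x true (show p ≠ i by omega), ← hgm, hH i (by omega),
        if_neg (show ¬ p < i by omega)]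
      norm_num [Bool.and_or_distrib_left]
    rw [cnt_congr hcongr, cnt_or]
    intro i ⟨h1, h2⟩
    simp only [Bool.and_eq_true, decide_eq_true_eq] at h1 h2
    omega
  -- ustart (gMap x) 1 computation
  have hust : ustart (gMap x) 1
      = cnt (fun i => isU x i && decide (pathHeight x i = 1)) p
        + (if pathHeight x p = 1 then 1 else 0)
        + cntB (fun i => isU x i && decide (pathHeight x i = -1)) (p+1) x.length := by
    rw [ustart_eq, hlen']
    rw [cnt_split (fun i => isU (gMap x) i && decide (pathHeight (gMap x) i = 1))
      (show p + 1 ≤ x.length by omega)]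
    rw [cnt_succ]
    congr 1
    · congr 1
      · apply cnt_congr
        intro i hi
        rw [hgm, isU_set_ne x true (show p ≠ i by omega), ← hgm, hH i (by omega),
          if_neg (show ¬ p < i by omega)]
        norm_num
      · rw [hgm, isU_set_self hpn true, ← hgm, hH p (by omega),
          if_neg (show ¬ p < p by omega)]
        by_cases hq : pathHeight x p = 1 <;> simp [hq]
    · apply cntB_congr
      intro i h1 h2
      rw [hgm, isU_set_ne x true (show p ≠ i by omega), ← hgm, hH i (by omega),
        if_pos (show p < i by omega)]
      congr 1
      rw [decide_eq_decide]
      omega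
  -- the crossing identities
  have hE1 := cross x 0 1 (by norm_num) p (by omega)
  have hE2 := crossB x (-1) 0 (by norm_num) (show p + 1 ≤ x.length by omega) (le_refl x.length)
  rw [hend, hstep_p] at hE2
  -- count splitting for the D-steps at height 0
  have hE4 := cnt_split (fun i => isD x i && decide (pathHeight x i = 0))
    (show p + 1 ≤ x.length by omega)
  have hE4' := cnt_succ (fun i => isD x i && decide (pathHeight x i = 0)) p
  rw [hPdsplit] at hcntp
  rw [dstart_eq] at hcntp
  -- main count identity
  have hmain : cnt (fun i => isU (gMap x) i
      && (decide (pathHeight (gMap x) i = 1) || decide (pathHeight (gMap x) i = 1-1))) p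
      = ustart (gMap x) 1 := by
    rw [hcntQ, hust]
    have hDp' : (isD x p && decide (pathHeight x p = 0)) = (decide (pathHeight x p = 0)) := by
      rw [hDp]; simp
    rw [hDp'] at hE4'
    rcases hph01 with h | h
    · rw [if_neg (by rw [h]; norm_num)]
      rw [h] at hE1 hE2 hE4'
      norm_num at hE1 hE2 hE4'
      omega
    · rw [if_pos h]
      rw [h] at hE1 hE2 hE4'
      norm_num at hE1 hE2 hE4'
      omega
  -- conclude: h'Idx (gMap x) = p
  have hfin : h'Idx (gMap x) = p := by
    have := getD_filter_range_eq (n := (gMap x).length)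
      (P := fun i => isU (gMap x) i
        && (decide (pathHeight (gMap x) i = 1) || decide (pathHeight (gMap x) i = 1-1)))
      (p := p) (j := ustart (gMap x) 1) (by omega) hQup hmain
    exact this
  rw [h'Map, hfin, hgm, List.set_set]
  exact set_eq_self hxp hpn

end GBijMain

namespace GBijBack
open GBij GBij2 GBij3 GBij4 GBijMain

lemma cnt_and_lt {A B : ℕ → Bool} {t i : ℕ} (hi : i < t) (hA : A i = true) (hB : B i = false) :
    cnt (fun j => A j && B j) t < cnt A t := by
  have hsplit : cnt A t = cnt (fun j => A j && B j) t + cnt (fun j => A j && !B j) t := by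
    have hcongr : ∀ j < t, A j = ((A j && B j) || (A j && !B j)) := by
      intro j _; cases A j <;> cases B j <;> rfl
    rw [cnt_congr hcongr, cnt_or]
    intro j ⟨h1, h2⟩
    rw [Bool.and_eq_true] at h1 h2
    rw [h1.2] at h2
    simp at h2
  have hpos : 1 ≤ cnt (fun j => A j && !B j) t := cnt_pos _ hi (by rw [hA, hB]; rfl)
  omega

lemma backward {k : ℕ} {y : List Bool} (hl : y.length = 2*k) (hc : y.count true = k+1) :
    (h'Map y).length = 2*k ∧ (h'Map y).count true = k ∧ flaws (h'Map y) ≠ k ∧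
      gMap (h'Map y) = y := by
  have hend : pathHeight y y.length = 2 := by
    rw [pathHeight_length y, hl, hc]; push_cast; ring
  -- there is a U-step starting at height 0
  have hE0 := cross y 0 1 (by norm_num) y.length (le_refl y.length)
  rw [hend] at hE0
  have hu0 : 1 ≤ cnt (fun i => isU y i && decide (pathHeight y i = 0)) y.length := by
    norm_num at hE0
    omega
  -- splitting the utouch predicate
  have hPusplit : ∀ t, cnt (fun i => isU y i
        && (decide (pathHeight y i = 1) || decide (pathHeight y i = 1-1))) t
      = cnt (fun i => isU y i && decide (pathHeight y i = 1)) t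
        + cnt (fun i => isU y i && decide (pathHeight y i = 0)) t := by
    intro t
    have hcongr : ∀ i < t, (isU y i
        && (decide (pathHeight y i = 1) || decide (pathHeight y i = 1-1)))
        = ((isU y i && decide (pathHeight y i = 1))
            || (isU y i && decide (pathHeight y i = 0))) := by
      intro i _
      norm_num [Bool.and_or_distrib_left]
    rw [cnt_congr hcongr, cnt_or]
    intro i ⟨h1, h2⟩
    simp only [Bool.and_eq_true, decide_eq_true_eq] at h1 h2
    omega
  have hj : ustart y 1 < cnt (fun i => isU y i
      && (decide (pathHeight y i = 1) || decide (pathHeight y i = 1-1))) y.length := by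
    rw [ustart_eq, hPusplit]
    omega
  obtain ⟨hPuq, hqn, hcntq⟩ := getD_filter_range hj
  set q := h'Idx y with hqdef
  have hgi : ((List.range y.length).filter (fun i => isU y i
      && (decide (pathHeight y i = 1) || decide (pathHeight y i = 1-1)))).getD (ustart y 1) 0
      = q := rfl
  rw [hgi] at hPuq hqn hcntq
  simp only [Bool.and_eq_true, Bool.or_eq_true, decide_eq_true_eq] at hPuq
  obtain ⟨hUq, hphq⟩ := hPuq
  have hph01 : pathHeight y q = 0 ∨ pathHeight y q = 1 := by
    rcases hphq with h | h
    · right; exact h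
    · left; omega
  have hyq : y.getD q true = true := hUq
  have hxm : h'Map y = y.set q false := rfl
  have hqn' : q < (h'Map y).length := by rw [hxm, List.length_set]; exact hqn
  have hlen' : (h'Map y).length = y.length := by rw [hxm, List.length_set]
  have hcount' : (h'Map y).count true = k := by
    rw [hxm, count_set_false hqn hyq, hc]
    omega
  -- heights of x = h'Map y
  have hH : ∀ i ≤ y.length, pathHeight (h'Map y) i
      = pathHeight y i + (if q < i then -2 else 0) := by
    intro i hi
    rw [hxm, pathHeight_set hqn false i hi, hyq]
    norm_num [stepVal]
  have hstep_q : pathHeight y (q+1) = pathHeight y q + 1 := by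
    have hsv : stepVal true = 1 := rfl
    rw [pathHeight_succ y q hqn, hyq, hsv]
  -- the count identity (I): NU0q = [ph q = 1] + NU1B
  have hN1s := cnt_split (fun i => isU y i && decide (pathHeight y i = 1))
    (show q + 1 ≤ y.length by omega)
  have hN1s' := cnt_succ (fun i => isU y i && decide (pathHeight y i = 1)) q
  have hUq' : (isU y q && decide (pathHeight y q = 1)) = decide (pathHeight y q = 1) := by
    rw [hUq]; simp
  rw [hUq'] at hN1s'
  rw [hPusplit] at hcntq
  rw [ustart_eq] at hcntq
  -- crossing identities
  have hE1 := cross y 0 1 (by norm_num) q (by omega)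
  have hE2 := crossB y 1 2 (by norm_num) (show q + 1 ≤ y.length by omega) (le_refl y.length)
  rw [hend, hstep_q] at hE2
  -- key: ND1q = [ph q = 0] + ND2B
  have hkey : ∀ hq0 : pathHeight y q = 0 ∨ pathHeight y q = 1,
      (cnt (fun i => isD y i && decide (pathHeight y i = 1)) q : ℤ)
      = (if pathHeight y q = 0 then 1 else 0)
        + cntB (fun i => isD y i && decide (pathHeight y i = 2)) (q+1) y.length := by
    intro _
    rcases hph01 with h | h
    · rw [if_pos h]
      rw [h] at hE1 hE2 hN1s'
      norm_num at hE1 hE2 hN1s'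
      omega
    · rw [if_neg (by rw [h]; norm_num)]
      rw [h] at hE1 hE2 hN1s'
      norm_num at hE1 hE2 hN1s'
      omega
  have hkey' := hkey hph01
  -- flaws (h'Map y) ≠ k
  have hDtot : cnt (isD (h'Map y)) (h'Map y).length = k := by
    rw [cnt_isD, hcount', hlen', hl]; omega
  have hwit : ∃ i, i < (h'Map y).length ∧ isD (h'Map y) i = true
      ∧ decide (pathHeight (h'Map y) i ≤ 0) = false := by
    rcases hph01 with h | h
    · -- ph q = 0 : there is a D-step of y at height 1 before q
      have hpos : 1 ≤ cnt (fun i => isD y i && decide (pathHeight y i = 1)) q := by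
        rw [if_pos h] at hkey'
        have := Int.ofNat_nonneg (cntB (fun i => isD y i && decide (pathHeight y i = 2))
          (q+1) y.length)
        omega
      obtain ⟨i1, hi1q, hi1⟩ := exists_of_cnt_pos hpos
      simp only [Bool.and_eq_true, decide_eq_true_eq] at hi1
      refine ⟨i1, by omega, ?_, ?_⟩
      · rw [hxm, isD_set_ne y false (show q ≠ i1 by omega)]
        exact hi1.1
      · rw [hH i1 (by omega), if_neg (show ¬ q < i1 by omega), hi1.2]
        norm_num
    · refine ⟨q, by omega, ?_, ?_⟩
      · rw [hxm, isD_set_self hqn false]; rfl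
      · rw [hH q (by omega), if_neg (show ¬ q < q by omega), h]
        norm_num
  have hflaws : flaws (h'Map y) ≠ k := by
    obtain ⟨i1, hi1len, hi1D, hi1h⟩ := hwit
    have := cnt_and_lt (A := isD (h'Map y))
      (B := fun i => decide (pathHeight (h'Map y) i ≤ 0))
      (t := (h'Map y).length) hi1len hi1D hi1h
    beta_reduce at this
    rw [flaws_eq]
    omega
  refine ⟨by rw [hlen', hl], hcount', hflaws, ?_⟩
  -- now show gMap (h'Map y) = y
  have hPdq : (isD (h'Map y) q && (decide (pathHeight (h'Map y) q = 0)
      || decide (pathHeight (h'Map y) q = 0+1))) = true := by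
    rw [hxm, isD_set_self hqn false, ← hxm, hH q (by omega),
      if_neg (show ¬ q < q by omega)]
    rcases hph01 with h | h <;> simp [h]
  -- count of the dtouch predicate of h'Map y below q
  have hcntP : cnt (fun i => isD (h'Map y) i && (decide (pathHeight (h'Map y) i = 0)
        || decide (pathHeight (h'Map y) i = 0+1))) q
      = cnt (fun i => isD y i && decide (pathHeight y i = 0)) q
        + cnt (fun i => isD y i && decide (pathHeight y i = 1)) q := by
    have hcongr : ∀ i < q, (isD (h'Map y) i && (decide (pathHeight (h'Map y) i = 0)
        || decide (pathHeight (h'Map y) i = 0+1)))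
        = ((isD y i && decide (pathHeight y i = 0))
            || (isD y i && decide (pathHeight y i = 1))) := by
      intro i hi
      rw [hxm, isD_set_ne y false (show q ≠ i by omega), ← hxm, hH i (by omega),
        if_neg (show ¬ q < i by omega)]
      norm_num [Bool.and_or_distrib_left]
    rw [cnt_congr hcongr, cnt_or]
    intro i ⟨h1, h2⟩
    simp only [Bool.and_eq_true, decide_eq_true_eq] at h1 h2
    omega
  -- dstart (h'Map y) 0 computation
  have hdst : dstart (h'Map y) 0
      = cnt (fun i => isD y i && decide (pathHeight y i = 0)) q
        + (if pathHeight y q = 0 then 1 else 0)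
        + cntB (fun i => isD y i && decide (pathHeight y i = 2)) (q+1) y.length := by
    rw [dstart_eq, hlen']
    rw [cnt_split (fun i => isD (h'Map y) i && decide (pathHeight (h'Map y) i = 0))
      (show q + 1 ≤ y.length by omega)]
    rw [cnt_succ]
    congr 1
    · congr 1
      · apply cnt_congr
        intro i hi
        rw [hxm, isD_set_ne y false (show q ≠ i by omega), ← hxm, hH i (by omega),
          if_neg (show ¬ q < i by omega)]
        norm_num
      · rw [hxm, isD_set_self hqn false, ← hxm, hH q (by omega),
          if_neg (show ¬ q < q by omega)]
        by_cases hq : pathHeight y q = 0 <;> simp [hq]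
    · apply cntB_congr
      intro i h1 h2
      rw [hxm, isD_set_ne y false (show q ≠ i by omega), ← hxm, hH i (by omega),
        if_pos (show q < i by omega)]
      congr 1
      rw [decide_eq_decide]
      omega
  have hmain : cnt (fun i => isD (h'Map y) i && (decide (pathHeight (h'Map y) i = 0)
        || decide (pathHeight (h'Map y) i = 0+1))) q = dstart (h'Map y) 0 := by
    rw [hcntP, hdst]
    rcases hph01 with h | h
    · rw [if_pos h] at hkey' ⊢
      omega
    · rw [if_neg (show ¬ pathHeight y q = 0 by rw [h]; norm_num)] at hkey' ⊢
      omega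
  have hfin : gIdx (h'Map y) = q := by
    exact getD_filter_range_eq (n := (h'Map y).length)
      (P := fun i => isD (h'Map y) i && (decide (pathHeight (h'Map y) i = 0)
        || decide (pathHeight (h'Map y) i = 0+1)))
      (p := q) (j := dstart (h'Map y) 0) hqn' hPdq hmain
  rw [gMap, hfin, hxm, List.set_set]
  exact set_eq_self hyq hqn

end GBijBack

theorem g_bijection (k : ℕ) :
    Set.BijOn gMap (LSet k k \ DyckSet k k) (LSet k (k+1)) ∧
    (∀ x ∈ LSet k k \ DyckSet k k, h'Map (gMap x) = x) ∧
    (∀ y ∈ LSet k (k+1), gMap (h'Map y) = y) := by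
  have mem_iff : ∀ x : List Bool, x ∈ LSet k k \ DyckSet k k ↔
      x.length = 2*k ∧ x.count true = k ∧ flaws x ≠ k := by
    intro x
    constructor
    · rintro ⟨⟨hl, hc⟩, hnd⟩
      exact ⟨hl, hc, fun hf => hnd ⟨hl, hc, hf⟩⟩
    · rintro ⟨hl, hc, hf⟩
      exact ⟨⟨hl, hc⟩, fun h => hf h.2.2⟩
  have linv : ∀ x ∈ LSet k k \ DyckSet k k, h'Map (gMap x) = x := by
    intro x hx
    obtain ⟨hl, hc, hf⟩ := (mem_iff x).mp hx
    exact (GBijMain.forward hl hc hf).2.2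
  have rinv : ∀ y ∈ LSet k (k+1), gMap (h'Map y) = y := by
    intro y hy
    obtain ⟨hl, hc⟩ := hy
    exact (GBijBack.backward hl hc).2.2.2
  refine ⟨⟨?_, ?_, ?_⟩, linv, rinv⟩
  · intro x hx
    obtain ⟨hl, hc, hf⟩ := (mem_iff x).mp hx
    exact ⟨(GBijMain.forward hl hc hf).1, (GBijMain.forward hl hc hf).2.1⟩
  · intro a ha b hb hab
    rw [← linv a ha, ← linv b hb, hab]
  · intro y hy
    obtain ⟨hl, hc⟩ := hy
    obtain ⟨h1, h2, h3, h4⟩ := GBijBack.backward hl hc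
    exact ⟨h'Map y, (mem_iff _).mpr ⟨h1, h2, h3⟩, h4⟩
end

section
/- For any Dyck path x with 2k steps and e flaws, where e < k, the path f(x) := h(g(x)) is a Dyck path with 2k steps and exactly e+1 flaws. -/
namespace Fpf

/-- generic prefix counter -/
def cnt (P : ℕ → Bool) (m : ℕ) : ℕ := ((List.range m).filter P).length

lemma cnt_succ (P : ℕ → Bool) (m : ℕ) :
    cnt P (m+1) = cnt P m + (if P m then 1 else 0) := by
  simp [cnt, List.range_succ, List.filter_append]
  split <;> simp_all

lemma cnt_mono (P : ℕ → Bool) {m n : ℕ} (h : m ≤ n) : cnt P m ≤ cnt P n := by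
  induction n, h using Nat.le_induction with
  | base => exact le_refl _
  | succ n hmn ih => rw [cnt_succ]; split <;> omega

lemma cnt_congr {P Q : ℕ → Bool} {m : ℕ} (h : ∀ j < m, P j = Q j) :
    cnt P m = cnt Q m := by
  unfold cnt
  rw [List.filter_congr]
  intro a ha
  exact h a (List.mem_range.mp ha)

lemma cnt_seg {P Q : ℕ → Bool} {m n : ℕ} (hmn : m ≤ n)
    (h : ∀ j, m ≤ j → j < n → P j = Q j) :
    cnt P n + cnt Q m = cnt Q n + cnt P m := by
  induction n, hmn using Nat.le_induction with
  | base => omega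
  | succ n hmn ih =>
    have := ih (fun j hj hj' => h j hj (by omega))
    rw [cnt_succ, cnt_succ, h n hmn (by omega)]
    split <;> omega

lemma cnt_or {A B : ℕ → Bool} {m : ℕ} (h : ∀ i, ¬(A i = true ∧ B i = true)) :
    cnt (fun i => A i || B i) m = cnt A m + cnt B m := by
  induction m with
  | zero => simp [cnt]
  | succ m ih =>
    rw [cnt_succ, cnt_succ, cnt_succ, ih]
    have := h m
    cases hA : A m <;> cases hB : B m <;> simp_all <;> omega

lemma cnt_pos {P : ℕ → Bool} {j m : ℕ} (hj : j < m) (hP : P j = true) : 1 ≤ cnt P m := by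
  have h1 : cnt P (j+1) = cnt P j + 1 := by rw [cnt_succ, hP]; simp
  have := cnt_mono P (show j+1 ≤ m by omega)
  omega

lemma cnt_strict {P : ℕ → Bool} {v w : ℕ} (hvw : v < w) (hP : P v = true) :
    cnt P v < cnt P w := by
  have h1 : cnt P (v+1) = cnt P v + 1 := by rw [cnt_succ, hP]; simp
  have := cnt_mono P (show v+1 ≤ w by omega)
  omega

lemma cnt_inj {P : ℕ → Bool} {v w : ℕ} (hv : P v = true) (hw : P w = true)
    (h : cnt P v = cnt P w) : v = w := by
  rcases Nat.lt_trichotomy v w with h' | h' | h'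
  · have := cnt_strict h' hv; omega
  · exact h'
  · have := cnt_strict h' hw; omega

lemma sorted_filter_take {l : List ℕ} (hl : l.Pairwise (· < ·)) :
    ∀ (i : ℕ) (hi : i < l.length),
      l.filter (fun a => decide (a < l[i])) = l.take i := by
  induction l with
  | nil => intro i hi; simp at hi
  | cons a t ih =>
    intro i hi
    match i with
    | 0 =>
      simp only [List.getElem_cons_zero, List.take_zero]
      rw [List.filter_eq_nil_iff]
      intro b hb
      simp only [decide_eq_true_eq, not_lt]
      rcases List.mem_cons.mp hb with h | h
      · omega
      · exact le_of_lt ((List.pairwise_cons.mp hl).1 b h)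
    | i + 1 =>
      have hit : i < t.length := by simpa using hi
      have hlt : a < t[i] := (List.pairwise_cons.mp hl).1 _ (List.getElem_mem _)
      simp only [List.getElem_cons_succ, List.take_succ_cons, List.filter_cons]
      rw [if_pos (by simpa using hlt)]
      rw [ih (List.Pairwise.of_cons hl) i (by simpa using hi)]

lemma range_filter_lt {v n : ℕ} (h : v ≤ n) :
    (List.range n).filter (fun a => decide (a < v)) = List.range v := by
  obtain ⟨m, rfl⟩ := Nat.exists_eq_add_of_le h
  rw [List.range_add, List.filter_append]
  rw [List.filter_eq_self.mpr (by intro b hb; simpa using List.mem_range.mp hb)]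
  rw [List.filter_eq_nil_iff.mpr (by intro b hb; simp only [List.mem_map] at hb; obtain ⟨c, _, rfl⟩ := hb; simp)]
  simp

lemma getElem_filter_range {n : ℕ} {P : ℕ → Bool} {i : ℕ}
    (hi : i < ((List.range n).filter P).length) :
    P (((List.range n).filter P)[i]) = true ∧
    ((List.range n).filter P)[i] < n ∧
    cnt P (((List.range n).filter P)[i]) = i := by
  set L := (List.range n).filter P with hL
  have hsort : L.Pairwise (· < ·) := List.Pairwise.filter _ List.pairwise_lt_range
  have hmem : L[i] ∈ L := List.getElem_mem _
  have hP : P L[i] = true := List.of_mem_filter hmem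
  have hlt : L[i] < n := List.mem_range.mp (List.mem_of_mem_filter hmem)
  refine ⟨hP, hlt, ?_⟩
  have key : ∀ v, v < n → (List.range v).filter P
      = ((List.range n).filter P).filter (fun a => decide (a < v)) := by
    intro v hv
    rw [List.filter_comm, range_filter_lt (le_of_lt hv)]
  rw [cnt, key _ hlt, ← hL, sorted_filter_take hsort i hi, List.length_take]
  omega

lemma getD_eq_getElem {l : List ℕ} {i : ℕ} (h : i < l.length) :
    l.getD i 0 = l[i] := by
  rw [List.getD_eq_getElem?_getD, List.getElem?_eq_getElem h]
  rfl

lemma getD_set_ne (l : List Bool) (i j : ℕ) (a : Bool) (h : i ≠ j) :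
    (l.set i a).getD j true = l.getD j true := by
  rw [List.getD_eq_getElem?_getD, List.getElem?_set_ne h, ← List.getD_eq_getElem?_getD]

lemma getD_set_self (l : List Bool) (i : ℕ) (a : Bool) (h : i < l.length) :
    (l.set i a).getD i true = a := by
  rw [List.getD_eq_getElem?_getD, List.getElem?_set_self h]
  rfl

lemma pathHeight_zero (x : List Bool) : pathHeight x 0 = 0 := by simp [pathHeight]

lemma pathHeight_cons (a : Bool) (t : List Bool) (j : ℕ) :
    pathHeight (a :: t) (j+1) = stepVal a + pathHeight t j := by
  simp [pathHeight]

lemma pathHeight_succ : ∀ (x : List Bool) (i : ℕ), i < x.length →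
    pathHeight x (i+1) = pathHeight x i + stepVal (x.getD i true) := by
  intro x
  induction x with
  | nil => intro i hi; simp at hi
  | cons a t ih =>
    intro i hi
    match i with
    | 0 => simp [pathHeight_cons, pathHeight_zero]
    | i + 1 =>
      rw [pathHeight_cons, pathHeight_cons, ih i (by simpa using hi)]
      simp [List.getD_cons_succ]
      ring

lemma pathHeight_set : ∀ (x : List Bool) (p : ℕ), p < x.length → ∀ (b : Bool) (j : ℕ),
    pathHeight (x.set p b) j
      = pathHeight x j + (if p < j then stepVal b - stepVal (x.getD p true) else 0) := by
  intro x
  induction x with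
  | nil => intro p hp; simp at hp
  | cons a t ih =>
    intro p hp b j
    match p, j with
    | 0, 0 => simp [pathHeight_zero]
    | 0, j + 1 =>
      simp only [List.set_cons_zero, pathHeight_cons, List.getD_cons_zero, if_pos (Nat.succ_pos j)]
      ring
    | p + 1, 0 => simp [pathHeight_zero]
    | p + 1, j + 1 =>
      simp only [List.set_cons_succ, pathHeight_cons, List.getD_cons_succ]
      rw [ih p (by simpa using hp) b j]
      by_cases h : p < j
      · rw [if_pos h, if_pos (by omega)]; ring
      · rw [if_neg h, if_neg (by omega)]; ring

lemma sum_stepVal : ∀ (l : List Bool), (l.map stepVal).sum = 2*(l.count true) - l.length := by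
  intro l
  induction l with
  | nil => simp
  | cons a t ih =>
    cases a <;> simp [List.count_cons, ih, stepVal] <;> ring

lemma cnt_shift (P : ℕ → Bool) (m : ℕ) :
    cnt P (m+1) = (if P 0 then 1 else 0) + cnt (fun i => P (i+1)) m := by
  rw [cnt, List.range_succ_eq_map, List.filter_cons]
  have hm : List.filter P (List.map Nat.succ (List.range m))
      = List.map Nat.succ (List.filter (fun i => P (i+1)) (List.range m)) := by
    rw [List.filter_map]
    rfl
  split <;> simp [cnt, hm] <;> omega

lemma cnt_isD : ∀ (x : List Bool), cnt (fun i => isD x i) x.length = x.count false := by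
  intro x
  induction x with
  | nil => simp [cnt]
  | cons a t ih =>
    have h : (a :: t).length = t.length + 1 := rfl
    rw [h, cnt_shift]
    have h2 : cnt (fun i => isD (a :: t) (i+1)) t.length = cnt (fun i => isD t i) t.length := by
      unfold cnt
      congr 1
    rw [h2, ih, List.count_cons]
    simp [isD, List.getD_cons_zero]
    cases a <;> simp <;> omega

lemma count_false_add (l : List Bool) : l.count false + l.count true = l.length := by
  induction l with
  | nil => simp
  | cons a t ih => cases a <;> simp [List.count_cons] <;> omega

lemma crossing (x : List Bool) (c c' : ℤ) (hc : c' = c + 1) :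
    ∀ m, m ≤ x.length →
      cnt (fun i => isU x i && decide (pathHeight x i = c)) m + (if (0:ℤ) > c then 1 else 0)
      = cnt (fun i => isD x i && decide (pathHeight x i = c')) m
          + (if pathHeight x m > c then 1 else 0) := by
  intro m
  induction m with
  | zero =>
    intro _
    rw [pathHeight_zero]
    simp [cnt]
  | succ m ih =>
    intro hm
    have ih' := ih (by omega)
    rw [cnt_succ, cnt_succ, pathHeight_succ x m (by omega)]
    subst hc
    cases hb : x.getD m true
    · have h1 : isU x m = false := hb
      have h2 : isD x m = true := by unfold isD; rw [hb]; rfl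
      rw [h1, h2]
      have h3 : stepVal false = -1 := rfl
      rw [h3]
      simp only [Bool.false_and, Bool.true_and, Bool.false_eq_true, decide_eq_true_eq,
        if_false, ite_false]
      split_ifs at * <;> omega
    · have h1 : isU x m = true := hb
      have h2 : isD x m = false := by unfold isD; rw [hb]; rfl
      rw [h1, h2]
      have h3 : stepVal true = 1 := rfl
      rw [h3]
      simp only [Bool.false_and, Bool.true_and, Bool.false_eq_true, decide_eq_true_eq,
        if_false, ite_false]
      split_ifs at * <;> omega

/-- U-steps at height exactly c -/
def U (x : List Bool) (c : ℤ) : ℕ → Bool := fun i => isU x i && decide (pathHeight x i = c)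
/-- D-steps at height exactly c -/
def D (x : List Bool) (c : ℤ) : ℕ → Bool := fun i => isD x i && decide (pathHeight x i = c)
/-- U-steps touching y=0/1 strip -/
def TU (x : List Bool) : ℕ → Bool :=
  fun i => isU x i && (decide (pathHeight x i = 0) || decide (pathHeight x i = 1))
/-- the exact predicate of `dtouch x 0` -/
def TD' (x : List Bool) : ℕ → Bool :=
  fun i => isD x i && (decide (pathHeight x i = 0) || decide (pathHeight x i = (0:ℤ)+1))
/-- the exact predicate of `utouch z 1` -/
def TUc (z : List Bool) : ℕ → Bool :=
  fun i => isU z i && (decide (pathHeight z i = 1) || decide (pathHeight z i = (1:ℤ)-1))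
/-- flaw predicate -/
def FD (z : List Bool) : ℕ → Bool := fun i => isD z i && decide (pathHeight z i ≤ 0)
/-- D-steps at height ≤ 2 (disjunctive form) -/
def Q2 (x : List Bool) : ℕ → Bool :=
  fun i => isD x i && decide (pathHeight x i ≤ 0 ∨ pathHeight x i = 1 ∨ pathHeight x i = 2)

end Fpf

theorem f_increases_flaws (k e : ℕ) (he : e < k) (x : List Bool) (hx : x ∈ DyckSet k e) :
    fMap x ∈ DyckSet k (e+1) := by
  classical
  obtain ⟨hlen, hcount, hfl⟩ := hx
  have hfl' : Fpf.cnt (Fpf.FD x) x.length = e := hfl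
  have hdd : dstart x 0 = Fpf.cnt (Fpf.D x 0) x.length := rfl
  have hsum : pathHeight x x.length = 0 := by
    rw [pathHeight, List.take_length, Fpf.sum_stepVal, hcount, hlen]
    push_cast
    ring
  have hDcnt : Fpf.cnt (fun i => isD x i) x.length = k := by
    rw [Fpf.cnt_isD]
    have := Fpf.count_false_add x
    omega
  -- existence of a D-step at height ≥ 1
  have hex : ∃ j, j < x.length ∧ isD x j = true ∧ 1 ≤ pathHeight x j := by
    by_contra hcon
    push_neg at hcon
    have : Fpf.cnt (Fpf.FD x) x.length = Fpf.cnt (fun i => isD x i) x.length := by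
      apply Fpf.cnt_congr
      intro j hj
      unfold Fpf.FD
      cases hD : isD x j
      · simp
      · have := hcon j hj hD
        simp only [Bool.true_and]
        rw [decide_eq_true (by omega : pathHeight x j ≤ 0)]
    omega
  obtain ⟨j, hjn, hjD, hj1⟩ := hex
  -- discrete IVT: a D-step at height exactly 1 exists
  have hD1ex : ∃ i, i < x.length ∧ Fpf.D x 1 i = true := by
    have hSex : ∃ m, j < m ∧ m ≤ x.length ∧ pathHeight x m ≤ 0 :=
      ⟨x.length, hjn, le_refl _, by rw [hsum]⟩
    obtain ⟨hm1, hm2, hm3⟩ := Nat.find_spec hSex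
    have hi_lt : Nat.find hSex - 1 < x.length := by omega
    have hHi : 1 ≤ pathHeight x (Nat.find hSex - 1) := by
      rcases Nat.lt_or_ge j (Nat.find hSex - 1) with hc | hc
      · have hmin := Nat.find_min hSex (show Nat.find hSex - 1 < Nat.find hSex by omega)
        push_neg at hmin
        have := hmin hc (by omega)
        omega
      · have hcc : Nat.find hSex - 1 = j := by omega
        rw [hcc]; exact hj1
    have hstep := Fpf.pathHeight_succ x (Nat.find hSex - 1) hi_lt
    have hm0eq : Nat.find hSex - 1 + 1 = Nat.find hSex := by omega
    rw [hm0eq] at hstep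
    cases hb : x.getD (Nat.find hSex - 1) true
    · refine ⟨Nat.find hSex - 1, hi_lt, ?_⟩
      unfold Fpf.D isD
      rw [hb] at hstep ⊢
      have h3 : stepVal false = -1 := rfl
      rw [h3] at hstep
      simp only [Bool.not_false, Bool.true_and]
      rw [decide_eq_true (by omega : pathHeight x (Nat.find hSex - 1) = 1)]
    · exfalso
      have h3 : stepVal true = 1 := rfl
      rw [hb, h3] at hstep
      omega
  obtain ⟨i1, hi1n, hi1D⟩ := hD1ex
  have hD1pos : 1 ≤ Fpf.cnt (Fpf.D x 1) x.length := Fpf.cnt_pos hi1n hi1D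
  -- splitting the touching predicates
  have hTDsplit : ∀ m, Fpf.cnt (Fpf.TD' x) m
      = Fpf.cnt (Fpf.D x 0) m + Fpf.cnt (Fpf.D x 1) m := by
    intro m
    rw [Fpf.cnt_congr (Q := fun i => Fpf.D x 0 i || Fpf.D x 1 i) ?_]
    · apply Fpf.cnt_or
      rintro i ⟨h1, h2⟩
      simp only [Fpf.D, Bool.and_eq_true, decide_eq_true_eq] at h1 h2
      omega
    · intro jj _
      unfold Fpf.TD' Fpf.D
      have h01 : (0:ℤ)+1 = 1 := by norm_num
      rw [h01]
      cases hb : isD x jj <;> simp [hb]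
  have hTUsplit : ∀ m, Fpf.cnt (Fpf.TU x) m
      = Fpf.cnt (Fpf.U x 0) m + Fpf.cnt (Fpf.U x 1) m := by
    intro m
    rw [Fpf.cnt_congr (Q := fun i => Fpf.U x 0 i || Fpf.U x 1 i) ?_]
    · apply Fpf.cnt_or
      rintro i ⟨h1, h2⟩
      simp only [Fpf.U, Bool.and_eq_true, decide_eq_true_eq] at h1 h2
      omega
    · intro jj _
      unfold Fpf.TU Fpf.U
      cases hb : isU x jj <;> simp [hb]
  -- extraction of p = gIdx x
  have hdd_lt : dstart x 0 < ((List.range x.length).filter (Fpf.TD' x)).length := by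
    show dstart x 0 < Fpf.cnt (Fpf.TD' x) x.length
    rw [hTDsplit]
    omega
  obtain ⟨p, hpTD, hpn, hpcnt, hp_eq⟩ :
      ∃ p, Fpf.TD' x p = true ∧ p < x.length ∧ Fpf.cnt (Fpf.TD' x) p = dstart x 0 ∧ gIdx x = p := by
    obtain ⟨h1, h2, h3⟩ := Fpf.getElem_filter_range hdd_lt
    refine ⟨_, h1, h2, h3, ?_⟩
    show (dtouch x 0).getD (dstart x 0) 0 = _
    rw [show dtouch x 0 = (List.range x.length).filter (Fpf.TD' x) from rfl]
    exact Fpf.getD_eq_getElem hdd_lt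
  have hxp : x.getD p true = false := by
    unfold Fpf.TD' isD at hpTD
    cases hb : x.getD p true
    · rfl
    · rw [hb] at hpTD; simp at hpTD
  have hp01 : pathHeight x p = 0 ∨ pathHeight x p = 1 := by
    have h := hpTD
    unfold Fpf.TD' at h
    simp only [Bool.and_eq_true, Bool.or_eq_true, decide_eq_true_eq] at h
    rcases h.2 with h' | h'
    · exact Or.inl h'
    · right; omega
  have hpcnt' : Fpf.cnt (Fpf.D x 0) p + Fpf.cnt (Fpf.D x 1) p = dstart x 0 := by
    rw [← hTDsplit p, hpcnt]
  -- crossing instances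
  have X0p : Fpf.cnt (Fpf.U x 0) p + (if (0:ℤ) > 0 then 1 else 0)
      = Fpf.cnt (Fpf.D x 1) p + (if pathHeight x p > 0 then 1 else 0) :=
    Fpf.crossing x 0 1 (by norm_num) p (le_of_lt hpn)
  have Xm1p : Fpf.cnt (Fpf.U x (-1)) p + (if (0:ℤ) > -1 then 1 else 0)
      = Fpf.cnt (Fpf.D x 0) p + (if pathHeight x p > -1 then 1 else 0) :=
    Fpf.crossing x (-1) 0 (by norm_num) p (le_of_lt hpn)
  have Xm1n : Fpf.cnt (Fpf.U x (-1)) x.length + (if (0:ℤ) > -1 then 1 else 0)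
      = Fpf.cnt (Fpf.D x 0) x.length + (if pathHeight x x.length > -1 then 1 else 0) :=
    Fpf.crossing x (-1) 0 (by norm_num) x.length (le_refl _)
  rw [hsum] at Xm1n
  -- there is at least one touching U-step before p
  have hb1 : 1 ≤ Fpf.cnt (Fpf.TU x) p := by
    rw [hTUsplit]
    rcases hp01 with h | h
    · have hD0p : Fpf.D x 0 p = true := by
        unfold Fpf.D isD
        rw [hxp, h]
        simp
      have h2 : Fpf.cnt (Fpf.D x 0) (p+1) = Fpf.cnt (Fpf.D x 0) p + 1 := by
        rw [Fpf.cnt_succ, hD0p]; simp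
      have h3 := Fpf.cnt_mono (Fpf.D x 0) (show p+1 ≤ x.length by omega)
      split_ifs at X0p <;> omega
    · split_ifs at X0p <;> omega
  -- extraction of q : the last touching U-step before p
  have hq_lt : Fpf.cnt (Fpf.TU x) p - 1 < ((List.range p).filter (Fpf.TU x)).length := by
    show Fpf.cnt (Fpf.TU x) p - 1 < Fpf.cnt (Fpf.TU x) p
    omega
  obtain ⟨q, hqTU, hqp, hqcnt⟩ :
      ∃ q, Fpf.TU x q = true ∧ q < p ∧ Fpf.cnt (Fpf.TU x) q = Fpf.cnt (Fpf.TU x) p - 1 := by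
    obtain ⟨h1, h2, h3⟩ := Fpf.getElem_filter_range hq_lt
    exact ⟨_, h1, h2, h3⟩
  have hxq : x.getD q true = true := by
    have h := hqTU
    unfold Fpf.TU isU at h
    cases hb : x.getD q true
    · rw [hb] at h; simp at h
    · rfl
  have hq01 : pathHeight x q = 0 ∨ pathHeight x q = 1 := by
    have h := hqTU
    unfold Fpf.TU at h
    simp only [Bool.and_eq_true, Bool.or_eq_true, decide_eq_true_eq] at h
    exact h.2
  -- facts about x' = x.set p true
  have hlen' : (x.set p true).length = x.length := List.length_set
  have hH' : ∀ jj, pathHeight (x.set p true) jj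
      = pathHeight x jj + (if p < jj then 2 else 0) := by
    intro jj
    rw [Fpf.pathHeight_set x p hpn true jj, hxp]
    have h2 : stepVal true - stepVal false = 2 := by norm_num [stepVal]
    rw [h2]
  have hstep'ne : ∀ jj, jj ≠ p → isU (x.set p true) jj = isU x jj := by
    intro jj hne
    unfold isU
    rw [Fpf.getD_set_ne x p jj true (Ne.symm hne)]
  have hisU'p : isU (x.set p true) p = true := by
    unfold isU
    rw [Fpf.getD_set_self x p true hpn]
  -- the star identity : ustart (x') 1 = number of touching U's before p
  have c1 : Fpf.cnt (Fpf.U (x.set p true) 1) p = Fpf.cnt (Fpf.U x 1) p := by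
    apply Fpf.cnt_congr
    intro jj hj
    unfold Fpf.U
    rw [hstep'ne jj (by omega), hH' jj, if_neg (by omega)]
    simp
  have c2 : Fpf.cnt (Fpf.U (x.set p true) 1) (p+1)
      = Fpf.cnt (Fpf.U (x.set p true) 1) p + (if pathHeight x p = 1 then 1 else 0) := by
    rw [Fpf.cnt_succ]
    congr 1
    unfold Fpf.U
    rw [hisU'p, hH' p, if_neg (lt_irrefl p)]
    simp
  have c3 : Fpf.cnt (Fpf.U (x.set p true) 1) x.length + Fpf.cnt (Fpf.U x (-1)) (p+1)
      = Fpf.cnt (Fpf.U x (-1)) x.length + Fpf.cnt (Fpf.U (x.set p true) 1) (p+1) := by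
    apply Fpf.cnt_seg (by omega)
    intro jj h1 h2
    unfold Fpf.U
    rw [hstep'ne jj (by omega), hH' jj, if_pos (by omega)]
    congr 1
    rw [decide_eq_decide]
    omega
  have c4 : Fpf.cnt (Fpf.U x (-1)) (p+1) = Fpf.cnt (Fpf.U x (-1)) p := by
    rw [Fpf.cnt_succ]
    have h : Fpf.U x (-1) p = false := by
      unfold Fpf.U isU
      rw [hxp]
      simp
    rw [h]; simp
  have hstar : Fpf.cnt (Fpf.U (x.set p true) 1) x.length = Fpf.cnt (Fpf.TU x) p := by
    rw [hTUsplit]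
    rcases hp01 with h | h <;> split_ifs at X0p Xm1p Xm1n c2 <;> omega
  have hust : ustart (x.set p true) 1 = Fpf.cnt (Fpf.TU x) p := by
    show Fpf.cnt (Fpf.U (x.set p true) 1) (x.set p true).length = _
    rw [hlen']
    exact hstar
  -- identification of hIdx (x') with q
  have d1 : Fpf.cnt (Fpf.TUc (x.set p true)) p = Fpf.cnt (Fpf.TU x) p := by
    apply Fpf.cnt_congr
    intro jj hj
    unfold Fpf.TUc Fpf.TU
    rw [hstep'ne jj (by omega), hH' jj, if_neg (by omega)]
    cases isU x jj <;> simp [Bool.or_comm]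
  have d2 : Fpf.cnt (Fpf.TUc (x.set p true)) (p+1)
      = Fpf.cnt (Fpf.TUc (x.set p true)) p + 1 := by
    rw [Fpf.cnt_succ]
    have h : Fpf.TUc (x.set p true) p = true := by
      unfold Fpf.TUc
      rw [hisU'p, hH' p, if_neg (lt_irrefl p)]
      rcases hp01 with h | h <;> simp [h]
    rw [h]; simp
  have hlenL : Fpf.cnt (Fpf.TU x) p - 1
      < ((List.range x.length).filter (Fpf.TUc (x.set p true))).length := by
    show Fpf.cnt (Fpf.TU x) p - 1 < Fpf.cnt (Fpf.TUc (x.set p true)) x.length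
    have := Fpf.cnt_mono (Fpf.TUc (x.set p true)) (show p+1 ≤ x.length by omega)
    omega
  have hqTUc : Fpf.TUc (x.set p true) q = true := by
    have hxq' : isU x q = true := hxq
    unfold Fpf.TUc
    rw [hstep'ne q (by omega), hH' q, if_neg (by omega), hxq']
    rcases hq01 with h | h <;> simp [h]
  have hqcntc : Fpf.cnt (Fpf.TUc (x.set p true)) q = Fpf.cnt (Fpf.TU x) p - 1 := by
    have h : Fpf.cnt (Fpf.TUc (x.set p true)) q = Fpf.cnt (Fpf.TU x) q := by
      apply Fpf.cnt_congr
      intro jj hj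
      unfold Fpf.TUc Fpf.TU
      rw [hstep'ne jj (by omega), hH' jj, if_neg (by omega)]
      cases hb : isU x jj <;> simp [hb, Bool.or_comm]
    rw [h, hqcnt]
  have hhidx : hIdx (x.set p true) = q := by
    obtain ⟨h1, h2, h3⟩ := Fpf.getElem_filter_range hlenL
    have hveq := Fpf.cnt_inj h1 hqTUc (by rw [h3, hqcntc])
    show (utouch (x.set p true) 1).getD (ustart (x.set p true) 1 - 1) 0 = q
    rw [hust]
    rw [show utouch (x.set p true) 1
        = (List.range (x.set p true).length).filter (Fpf.TUc (x.set p true)) from rfl]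
    rw [hlen']
    rw [Fpf.getD_eq_getElem hlenL]
    exact hveq
  have hfmap : fMap x = (x.set p true).set q false := by
    show hMap (gMap x) = _
    unfold hMap gMap
    rw [hp_eq, hhidx]
  -- facts about y = (x.set p true).set q false
  have hqlen' : q < (x.set p true).length := by rw [hlen']; omega
  have hx'q : (x.set p true).getD q true = true := by
    rw [Fpf.getD_set_ne x p q true (by omega)]
    exact hxq
  have hleny : ((x.set p true).set q false).length = x.length := by
    rw [List.length_set, hlen']
  have hHy : ∀ jj, pathHeight ((x.set p true).set q false) jj
      = pathHeight x jj + (if p < jj then 2 else 0) + (if q < jj then -2 else 0) := by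
    intro jj
    rw [Fpf.pathHeight_set (x.set p true) q hqlen' false jj, hx'q, hH' jj]
    have h2 : stepVal false - stepVal true = -2 := by norm_num [stepVal]
    rw [h2]
  have hyD : ∀ jj, jj ≠ q → jj ≠ p → isD ((x.set p true).set q false) jj = isD x jj := by
    intro jj h1 h2
    unfold isD
    rw [Fpf.getD_set_ne _ q jj false (Ne.symm h1), Fpf.getD_set_ne x p jj true (Ne.symm h2)]
  have hyDq : isD ((x.set p true).set q false) q = true := by
    unfold isD
    rw [Fpf.getD_set_self _ q false hqlen']
    rfl
  have hyDp : isD ((x.set p true).set q false) p = false := by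
    unfold isD
    rw [Fpf.getD_set_ne _ q p false (by omega), Fpf.getD_set_self x p true hpn]
    rfl
  -- the flaw count chain
  have e1 : Fpf.cnt (Fpf.FD ((x.set p true).set q false)) q = Fpf.cnt (Fpf.FD x) q := by
    apply Fpf.cnt_congr
    intro jj hj
    unfold Fpf.FD
    rw [hyD jj (by omega) (by omega), hHy jj, if_neg (by omega), if_neg (by omega)]
    simp
  have e2 : Fpf.cnt (Fpf.FD ((x.set p true).set q false)) (q+1)
      = Fpf.cnt (Fpf.FD ((x.set p true).set q false)) q
        + (if pathHeight x q = 0 then 1 else 0) := by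
    have hcond : Fpf.FD ((x.set p true).set q false) q = decide (pathHeight x q = 0) := by
      unfold Fpf.FD
      rw [hyDq, hHy q, if_neg (show ¬ p < q by omega), if_neg (lt_irrefl q)]
      rcases hq01 with h | h <;> simp [h]
    rw [Fpf.cnt_succ, hcond]
    simp
  have e3 : Fpf.cnt (Fpf.FD ((x.set p true).set q false)) p + Fpf.cnt (Fpf.Q2 x) (q+1)
      = Fpf.cnt (Fpf.Q2 x) p + Fpf.cnt (Fpf.FD ((x.set p true).set q false)) (q+1) := by
    apply Fpf.cnt_seg (by omega)
    intro jj h1 h2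
    unfold Fpf.FD Fpf.Q2
    rw [hyD jj (by omega) (by omega), hHy jj, if_neg (by omega), if_pos (by omega)]
    congr 1
    rw [decide_eq_decide]
    omega
  have e4 : ∀ m, Fpf.cnt (Fpf.Q2 x) m
      = Fpf.cnt (Fpf.FD x) m + (Fpf.cnt (Fpf.D x 1) m + Fpf.cnt (Fpf.D x 2) m) := by
    intro m
    rw [Fpf.cnt_congr (Q := fun i => Fpf.FD x i || (Fpf.D x 1 i || Fpf.D x 2 i)) ?_]
    · rw [Fpf.cnt_or ?_]
      · congr 1
        apply Fpf.cnt_or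
        rintro i ⟨h1', h2'⟩
        simp only [Fpf.D, Bool.and_eq_true, decide_eq_true_eq] at h1' h2'
        omega
      · rintro i ⟨h1', h2'⟩
        simp only [Fpf.FD, Fpf.D, Bool.and_eq_true, Bool.or_eq_true, decide_eq_true_eq] at h1' h2'
        rcases h2' with ⟨_, h⟩ | ⟨_, h⟩ <;> omega
    · intro jj _
      unfold Fpf.Q2 Fpf.FD Fpf.D
      rcases Bool.eq_false_or_eq_true (isD x jj) with hb | hb <;> simp [hb, Bool.decide_or]
  have e5 : Fpf.cnt (Fpf.FD ((x.set p true).set q false)) (p+1)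
      = Fpf.cnt (Fpf.FD ((x.set p true).set q false)) p := by
    rw [Fpf.cnt_succ]
    have h : Fpf.FD ((x.set p true).set q false) p = false := by
      unfold Fpf.FD
      rw [hyDp]
      simp
    rw [h]; simp
  have e6 : Fpf.cnt (Fpf.FD ((x.set p true).set q false)) x.length + Fpf.cnt (Fpf.FD x) (p+1)
      = Fpf.cnt (Fpf.FD x) x.length
        + Fpf.cnt (Fpf.FD ((x.set p true).set q false)) (p+1) := by
    apply Fpf.cnt_seg (by omega)
    intro jj h1 h2
    unfold Fpf.FD
    rw [hyD jj (by omega) (by omega), hHy jj, if_pos (by omega), if_pos (by omega)]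
    congr 1
    rw [decide_eq_decide]
    omega
  have e7 : Fpf.cnt (Fpf.FD x) (p+1)
      = Fpf.cnt (Fpf.FD x) p + (if pathHeight x p = 0 then 1 else 0) := by
    rw [Fpf.cnt_succ]
    congr 1
    unfold Fpf.FD
    have hDp : isD x p = true := by unfold isD; rw [hxp]; rfl
    rw [hDp]
    rcases hp01 with h | h <;> simp [h]
  have e8 : Fpf.cnt (Fpf.FD x) (q+1) = Fpf.cnt (Fpf.FD x) q := by
    rw [Fpf.cnt_succ]
    have h : Fpf.FD x q = false := by
      unfold Fpf.FD isD
      rw [hxq]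
      rfl
    rw [h]; simp
  -- remaining crossing instances on the interval (q, p)
  have hstepq : pathHeight x (q+1) = pathHeight x q + 1 := by
    rw [Fpf.pathHeight_succ x q (by omega), hxq]
    norm_num [stepVal]
  have X0q : Fpf.cnt (Fpf.U x 0) (q+1) + (if (0:ℤ) > 0 then 1 else 0)
      = Fpf.cnt (Fpf.D x 1) (q+1) + (if pathHeight x (q+1) > 0 then 1 else 0) :=
    Fpf.crossing x 0 1 (by norm_num) (q+1) (by omega)
  have X1q : Fpf.cnt (Fpf.U x 1) (q+1) + (if (0:ℤ) > 1 then 1 else 0)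
      = Fpf.cnt (Fpf.D x 2) (q+1) + (if pathHeight x (q+1) > 1 then 1 else 0) :=
    Fpf.crossing x 1 2 (by norm_num) (q+1) (by omega)
  have X1p : Fpf.cnt (Fpf.U x 1) p + (if (0:ℤ) > 1 then 1 else 0)
      = Fpf.cnt (Fpf.D x 2) p + (if pathHeight x p > 1 then 1 else 0) :=
    Fpf.crossing x 1 2 (by norm_num) p (by omega)
  rw [hstepq] at X0q X1q
  have hTUq : Fpf.cnt (Fpf.TU x) (q+1) = Fpf.cnt (Fpf.TU x) q + 1 := by
    rw [Fpf.cnt_succ, hqTU]; simp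
  have hmU0 := Fpf.cnt_mono (Fpf.U x 0) (show q+1 ≤ p by omega)
  have hmU1 := Fpf.cnt_mono (Fpf.U x 1) (show q+1 ≤ p by omega)
  have hTUsq := hTUsplit (q+1)
  have hTUsp := hTUsplit p
  have e4p := e4 p
  have e4q := e4 (q+1)
  -- conclusion
  rw [hfmap]
  refine ⟨?_, ?_, ?_⟩
  · rw [hleny]; exact hlen
  · have hysum : pathHeight ((x.set p true).set q false) ((x.set p true).set q false).length
        = 0 := by
      rw [hleny, hHy, if_pos (by omega), if_pos (by omega), hsum]
      norm_num
    rw [pathHeight, List.take_length, Fpf.sum_stepVal] at hysum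
    have h3 : ((x.set p true).set q false).length = 2*k := by rw [hleny]; exact hlen
    omega
  · show Fpf.cnt (Fpf.FD ((x.set p true).set q false)) ((x.set p true).set q false).length
        = e + 1
    rw [hleny]
    norm_num at X0p X0q X1p X1q Xm1p Xm1n
    rcases hp01 with hp' | hp' <;> rcases hq01 with hq' | hq' <;>
      rw [hp'] at X0p X1p Xm1p e7 <;> rw [hq'] at X0q X1q e2 <;>
      norm_num at X0p X0q X1p X1q Xm1p e2 e7 <;>
      omega
end
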